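/- arXiv:2407.10161 — 2 statements merged into one kernel-verified Lean document; each statement's English description precedes it below -/
import Mathlib

section
/- Let E and F be homogeneous Moran sets with the same parameters ([0,1], {n_k}, {r_k}), with uniform Bernoulli measures μ and ν respectively, and let f : E → F be a bi-Lipschitz map. Then the measure f*ν : B ↦ ν(f(B)) is equivalent to μ in the strong sense: there exists α > 0 such that α^{-1}·μ(B) ≤ ν(f(B)) ≤ α·μ(B) for every Borel set B ⊆ E. -/
open Set MeasureTheory
open scoped ENNReal

/-- `σ = (σ₁, …, σ_k)` is a valid word for the sequence `n`: its `i`-th entry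
(1-based position `i+1` for 0-based index `i`) is smaller than `n (i+1)`. -/
def IsWord (n : ℕ → ℕ) (σ : List ℕ) : Prop :=
  ∀ i : Fin σ.length, σ.get i < n (i + 1)

/-- A homogeneous Moran structure with parameters `([0,1], {n_k}, {r_k})`:
a family of closed intervals `J σ` indexed by words, with `J ∅ = [0,1]`,
nested, with pairwise disjoint interiors at each level, and
`|J (σ*i)| = r_{k} |J σ|` for `σ` of length `k-1`. -/
structure MoranStructure (n : ℕ → ℕ) (r : ℕ → ℝ) where
  J : List ℕ → Set ℝ
  J_empty : J [] = Set.Icc 0 1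
  J_closedInterval : ∀ σ : List ℕ, IsWord n σ → ∃ a b : ℝ, a ≤ b ∧ J σ = Set.Icc a b
  J_subset : ∀ σ : List ℕ, IsWord n σ → ∀ i < n (σ.length + 1), J (σ ++ [i]) ⊆ J σ
  J_disjointInterior : ∀ σ : List ℕ, IsWord n σ → ∀ i < n (σ.length + 1),
      ∀ j < n (σ.length + 1), i ≠ j →
      interior (J (σ ++ [i])) ∩ interior (J (σ ++ [j])) = ∅
  J_diam : ∀ σ : List ℕ, IsWord n σ → ∀ i < n (σ.length + 1),
      Metric.diam (J (σ ++ [i])) = r (σ.length + 1) * Metric.diam (J σ)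

variable {n : ℕ → ℕ} {r : ℕ → ℝ}

/-- The `k`-th approximation `E_k`: the union of all basic intervals of rank `k`. -/
def MoranStructure.approx (M : MoranStructure n r) (k : ℕ) : Set ℝ :=
  ⋃ σ ∈ {σ : List ℕ | σ.length = k ∧ IsWord n σ}, M.J σ

/-- The homogeneous Moran set `E = ⋂_k E_k`. -/
def MoranStructure.moranSet (M : MoranStructure n r) : Set ℝ :=
  ⋂ k, M.approx k

/-- The total gap of rank `k`: `Δ_k = r_1 ⋯ r_{k-1} (1 - n_k r_k)`. -/
noncomputable def totalGap (n : ℕ → ℕ) (r : ℕ → ℝ) (k : ℕ) : ℝ :=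
  (∏ j ∈ Finset.Icc 1 (k - 1), r j) * (1 - (n k : ℝ) * r k)

/-- Distance between two subsets of `ℝ`: `dist(A,B) = inf {|x-y| : x ∈ A, y ∈ B}`. -/
noncomputable def setDist (A B : Set ℝ) : ℝ :=
  sInf {d : ℝ | ∃ x ∈ A, ∃ y ∈ B, d = |x - y|}

/-- The weak separation condition with constant `η₀`. -/
def MoranStructure.WSC (M : MoranStructure n r) (η₀ : ℝ) : Prop :=
  ∀ σ : List ℕ, IsWord n σ → ∀ i < n (σ.length + 1), ∀ j < n (σ.length + 1), i ≠ j →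
    (M.J (σ ++ [i]) ∩ M.J (σ ++ [j])).Nonempty ∨
      setDist (M.J (σ ++ [i])) (M.J (σ ++ [j])) >
        η₀ * (Metric.diam (M.J σ) -
          ∑ m ∈ Finset.range (n (σ.length + 1)), Metric.diam (M.J (σ ++ [m])))

/-- `μ` is the uniform Bernoulli measure of the Moran structure `M`:
a Borel probability measure concentrated on the Moran set, giving each
cylinder of rank `k` measure `1/(n_1 ⋯ n_k)`. -/
def IsUniformBernoulli (M : MoranStructure n r) (μ : Measure ℝ) : Prop :=
  IsProbabilityMeasure μ ∧ μ M.moranSetᶜ = 0 ∧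
    ∀ σ : List ℕ, IsWord n σ →
      μ (M.J σ ∩ M.moranSet) = 1 / ∏ j ∈ Finset.Icc 1 σ.length, (n j : ℝ≥0∞)

/-- `I` is a connected component of the set `S ⊆ ℝ`. -/
def IsCC (S I : Set ℝ) : Prop := ∃ x ∈ S, I = connectedComponentIn S x

/-- `X` is `δ`-connected: any two points of `X` are joined by a finite chain
of points of `X` with consecutive distances at most `δ`. -/
def DeltaConnected (δ : ℝ) (X : Set ℝ) : Prop :=
  ∀ x ∈ X, ∀ y ∈ X, ∃ (m : ℕ) (z : Fin (m + 1) → ℝ),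
    (∀ i, z i ∈ X) ∧ z 0 = x ∧ z (Fin.last m) = y ∧
      ∀ i : Fin m, |z i.castSucc - z i.succ| ≤ δ
set_option maxHeartbeats 1000000

section Aux
variable {n : ℕ → ℕ} {r : ℕ → ℝ}

lemma isWord_append {σ : List ℕ} {i : ℕ} :
    IsWord n (σ ++ [i]) ↔ IsWord n σ ∧ i < n (σ.length + 1) := by
  constructor
  · intro h
    refine ⟨fun m => ?_, ?_⟩
    · have hm : (m : ℕ) < (σ ++ [i]).length := by
        simp only [List.length_append, List.length_singleton]
        exact m.2.trans (Nat.lt_succ_self _)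
      have := h ⟨m, hm⟩
      simpa [List.get_eq_getElem, List.getElem_append_left m.2] using this
    · have hl : σ.length < (σ ++ [i]).length := by simp
      have := h ⟨σ.length, hl⟩
      simpa [List.get_eq_getElem] using this
  · rintro ⟨h, hi⟩ m
    rcases lt_or_ge (m : ℕ) σ.length with hm | hm
    · have := h ⟨m, hm⟩
      simpa [List.get_eq_getElem, List.getElem_append_left hm] using this
    · have hme : (m : ℕ) = σ.length := by
        have := m.2
        simp only [List.length_append, List.length_singleton] at this
        omega
      have hg : (σ ++ [i]).get m = i := by
        simp [List.get_eq_getElem, hme]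
      rw [hg, hme]
      exact hi

lemma isWord_prefix {p σ : List ℕ} (h : IsWord n σ) (hp : p <+: σ) : IsWord n p := by
  intro m
  have hm : (m : ℕ) < σ.length := lt_of_lt_of_le m.2 hp.length_le
  have hg : p.get m = σ.get ⟨m, hm⟩ := by
    simp only [List.get_eq_getElem]
    exact (hp.getElem m.2)
  rw [hg]; exact h ⟨m, hm⟩

end Aux
section Aux2
variable {n : ℕ → ℕ} {r : ℕ → ℝ}

lemma exists_common_prefix : ∀ (τ τ' : List ℕ), ¬ τ <+: τ' → ¬ τ' <+: τ →
    ∃ (q : List ℕ) (i j : ℕ) (s s' : List ℕ), i ≠ j ∧ τ = q ++ i :: s ∧ τ' = q ++ j :: s'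
  | [], τ', h1, _ => absurd List.nil_prefix h1
  | (a :: t), [], _, h2 => absurd List.nil_prefix h2
  | (a :: t), (b :: t'), h1, h2 => by
    by_cases hab : a = b
    · subst hab
      have h1' : ¬ t <+: t' := fun h => h1 (List.cons_prefix_cons.mpr ⟨rfl, h⟩)
      have h2' : ¬ t' <+: t := fun h => h2 (List.cons_prefix_cons.mpr ⟨rfl, h⟩)
      obtain ⟨q, i, j, s, s', hij, ht, ht'⟩ := exists_common_prefix t t' h1' h2'
      exact ⟨a :: q, i, j, s, s', hij, by simp [ht], by simp [ht']⟩
    · exact ⟨[], a, b, t, t', hab, rfl, rfl⟩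

lemma prod_r_pos (hr : ∀ k ≥ 1, 0 < r k ∧ (n k : ℝ) * r k ≤ 1) (k : ℕ) :
    0 < ∏ j ∈ Finset.Icc 1 k, r j :=
  Finset.prod_pos fun j hj => (hr j (Finset.mem_Icc.mp hj).1).1

lemma prod_n_inv_le (hn : ∀ k ≥ 1, 2 ≤ n k) (k : ℕ) :
    (1 : ℝ≥0∞) / (∏ j ∈ Finset.Icc 1 k, (n j : ℝ≥0∞)) ≤ 2⁻¹ ^ k := by
  have h2 : ((2:ℝ≥0∞)) ^ k ≤ ∏ j ∈ Finset.Icc 1 k, (n j : ℝ≥0∞) := by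
    calc ((2:ℝ≥0∞)) ^ k = ∏ _j ∈ Finset.Icc 1 k, (2:ℝ≥0∞) := by
          rw [Finset.prod_const, Nat.card_Icc]; norm_num
      _ ≤ ∏ j ∈ Finset.Icc 1 k, (n j : ℝ≥0∞) := by
          refine Finset.prod_le_prod' fun j hj => ?_
          have := hn j (Finset.mem_Icc.mp hj).1
          exact_mod_cast Nat.cast_le.mpr this
  rw [one_div, ← ENNReal.inv_pow]
  exact ENNReal.inv_le_inv.mpr h2

lemma MoranStructure.diam_J (M : MoranStructure n r) :
    ∀ σ : List ℕ, IsWord n σ → Metric.diam (M.J σ) = ∏ j ∈ Finset.Icc 1 σ.length, r j := by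
  intro σ
  induction σ using List.reverseRecOn with
  | nil => intro _; rw [M.J_empty]; simp [Real.diam_Icc (by norm_num : (0:ℝ) ≤ 1)]
  | append_singleton σ i IH =>
    intro h
    obtain ⟨hw, hi⟩ := isWord_append.mp h
    rw [M.J_diam σ hw i hi, IH hw]
    simp only [List.length_append, List.length_singleton]
    rw [Finset.prod_Icc_succ_top (Nat.le_add_left 1 _)]
    ring

lemma MoranStructure.J_prefix_subset (M : MoranStructure n r) :
    ∀ (t p : List ℕ), IsWord n (p ++ t) → M.J (p ++ t) ⊆ M.J p := by
  intro t
  induction t using List.reverseRecOn with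
  | nil => intro p h; simp
  | append_singleton s i IH =>
    intro p h
    rw [← List.append_assoc] at h ⊢
    obtain ⟨hw, hi⟩ := isWord_append.mp h
    exact (M.J_subset (p ++ s) hw i hi).trans (IH p hw)

end Aux2
section Aux3
variable {n : ℕ → ℕ} {r : ℕ → ℝ}

lemma MoranStructure.interior_disjoint (M : MoranStructure n r) {τ τ' : List ℕ}
    (hτ : IsWord n τ) (hτ' : IsWord n τ') (h1 : ¬ τ <+: τ') (h2 : ¬ τ' <+: τ) :
    interior (M.J τ) ∩ interior (M.J τ') = ∅ := by
  obtain ⟨q, i, j, s, s', hij, ht, ht'⟩ := exists_common_prefix τ τ' h1 h2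
  have hpre : (q ++ [i]) <+: τ := ⟨s, by rw [ht]; simp⟩
  have hpre' : (q ++ [j]) <+: τ' := ⟨s', by rw [ht']; simp⟩
  have hwqi : IsWord n (q ++ [i]) := isWord_prefix hτ hpre
  have hwqj : IsWord n (q ++ [j]) := isWord_prefix hτ' hpre'
  obtain ⟨hwq, hi⟩ := isWord_append.mp hwqi
  obtain ⟨_, hj⟩ := isWord_append.mp hwqj
  have hdisj := M.J_disjointInterior q hwq i hi j hj hij
  have hsub : M.J τ ⊆ M.J (q ++ [i]) := by
    obtain ⟨t, htt⟩ := hpre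
    have := M.J_prefix_subset t (q ++ [i]) (htt ▸ hτ)
    rwa [htt] at this
  have hsub' : M.J τ' ⊆ M.J (q ++ [j]) := by
    obtain ⟨t, htt⟩ := hpre'
    have := M.J_prefix_subset t (q ++ [j]) (htt ▸ hτ')
    rwa [htt] at this
  apply Set.eq_empty_of_subset_empty
  calc interior (M.J τ) ∩ interior (M.J τ')
      ⊆ interior (M.J (q ++ [i])) ∩ interior (M.J (q ++ [j])) :=
        Set.inter_subset_inter (interior_mono hsub) (interior_mono hsub')
    _ = ∅ := hdisj

lemma Icc_inter_subsingleton {a b c d : ℝ} (h : Set.Ioo a b ∩ Set.Ioo c d = ∅) :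
    (Set.Icc a b ∩ Set.Icc c d).Subsingleton := by
  have key : ∀ x y : ℝ, x ∈ Set.Icc a b ∩ Set.Icc c d → y ∈ Set.Icc a b ∩ Set.Icc c d →
      x < y → False := by
    intro x y ⟨hx1, hx2⟩ ⟨hy1, hy2⟩ hxy
    have hm : (x + y) / 2 ∈ Set.Ioo a b ∩ Set.Ioo c d := by
      constructor
      · exact ⟨lt_of_le_of_lt hx1.1 (by linarith), lt_of_lt_of_le (by linarith) hy1.2⟩
      · exact ⟨lt_of_le_of_lt hx2.1 (by linarith), lt_of_lt_of_le (by linarith) hy2.2⟩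
    rw [h] at hm
    exact hm
  intro x hx y hy
  by_contra hne
  rcases lt_or_gt_of_ne hne with hlt | hgt
  · exact key x y hx hy hlt
  · exact key y x hy hx hgt

lemma MoranStructure.J_inter_subsingleton (M : MoranStructure n r) {τ τ' : List ℕ}
    (hτ : IsWord n τ) (hτ' : IsWord n τ') (h1 : ¬ τ <+: τ') (h2 : ¬ τ' <+: τ) :
    (M.J τ ∩ M.J τ').Subsingleton := by
  obtain ⟨a, b, hab, hJ⟩ := M.J_closedInterval τ hτ
  obtain ⟨c, d, hcd, hJ'⟩ := M.J_closedInterval τ' hτ'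
  have hdisj := M.interior_disjoint hτ hτ' h1 h2
  rw [hJ, hJ'] at hdisj; simp only [interior_Icc] at hdisj
  rw [hJ, hJ']
  exact Icc_inter_subsingleton hdisj

lemma MoranStructure.exists_word_mem (M : MoranStructure n r) {x : ℝ}
    (hx : x ∈ M.moranSet) (k : ℕ) :
    ∃ σ : List ℕ, σ.length = k ∧ IsWord n σ ∧ x ∈ M.J σ := by
  have := Set.mem_iInter.mp hx k
  simp only [MoranStructure.approx, Set.mem_iUnion, Set.mem_setOf_eq] at this
  obtain ⟨σ, ⟨hlen, hw⟩, hmem⟩ := this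
  exact ⟨σ, hlen, hw, hmem⟩

lemma MoranStructure.measurable_moranSet (M : MoranStructure n r) :
    MeasurableSet M.moranSet := by
  apply MeasurableSet.iInter
  intro k
  apply MeasurableSet.biUnion (Set.to_countable _)
  rintro σ ⟨_, hw⟩
  obtain ⟨a, b, _, hJ⟩ := M.J_closedInterval σ hw
  rw [hJ]; exact measurableSet_Icc

lemma measure_singleton_zero {M : MoranStructure n r} {μ : Measure ℝ}
    (hμ : IsUniformBernoulli M μ) (hn : ∀ k ≥ 1, 2 ≤ n k) (x : ℝ) : μ {x} = 0 := by
  by_cases hx : x ∈ M.moranSet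
  · have hbound : ∀ k : ℕ, μ {x} ≤ 2⁻¹ ^ k := by
      intro k
      obtain ⟨σ, hlen, hw, hmem⟩ := M.exists_word_mem hx k
      have hsub : {x} ⊆ M.J σ ∩ M.moranSet := by
        intro y hy; rcases hy with rfl; exact ⟨hmem, hx⟩
      calc μ {x} ≤ μ (M.J σ ∩ M.moranSet) := measure_mono hsub
        _ = 1 / ∏ j ∈ Finset.Icc 1 σ.length, (n j : ℝ≥0∞) := hμ.2.2 σ hw
        _ ≤ 2⁻¹ ^ k := hlen ▸ prod_n_inv_le hn σ.length
    have htend : Filter.Tendsto (fun k : ℕ => (2⁻¹ : ℝ≥0∞) ^ k) Filter.atTop (nhds 0) :=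
      ENNReal.tendsto_pow_atTop_nhds_zero_of_lt_one (by norm_num)
    have := ge_of_tendsto htend (Filter.Eventually.of_forall hbound)
    exact le_antisymm this (zero_le)
  · exact measure_mono_null (Set.singleton_subset_iff.mpr hx) hμ.2.1

lemma cylinder_aedisjoint {M : MoranStructure n r} {μ : Measure ℝ}
    (hμ : IsUniformBernoulli M μ) (hn : ∀ k ≥ 1, 2 ≤ n k) {τ τ' : List ℕ}
    (hτ : IsWord n τ) (hτ' : IsWord n τ') (h1 : ¬ τ <+: τ') (h2 : ¬ τ' <+: τ) :
    μ ((M.J τ ∩ M.moranSet) ∩ (M.J τ' ∩ M.moranSet)) = 0 := by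
  have hsub : (M.J τ ∩ M.moranSet) ∩ (M.J τ' ∩ M.moranSet) ⊆ M.J τ ∩ M.J τ' := by
    rintro y ⟨⟨h1', _⟩, ⟨h2', _⟩⟩; exact ⟨h1', h2'⟩
  have hss := (M.J_inter_subsingleton hτ hτ' h1 h2).anti hsub
  rcases hss.eq_empty_or_singleton with he | ⟨y, he⟩
  · rw [he]; exact measure_empty
  · rw [he]; exact measure_singleton_zero hμ hn y

end Aux3
section Aux4
variable {n : ℕ → ℕ} {r : ℕ → ℝ}

lemma cylinder_push_le (hn : ∀ k ≥ 1, 2 ≤ n k) (hr : ∀ k ≥ 1, 0 < r k ∧ (n k : ℝ) * r k ≤ 1)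
    (M1 M2 : MoranStructure n r) (μ1 μ2 : Measure ℝ)
    (hμ1 : IsUniformBernoulli M1 μ1) (hμ2 : IsUniformBernoulli M2 μ2)
    (C : ℝ) (hC : 1 ≤ C) (h : ℝ → ℝ)
    (hlip : ∀ x ∈ M1.moranSet, ∀ y ∈ M1.moranSet, |h x - h y| ≤ C * |x - y|)
    (him : h '' M1.moranSet ⊆ M2.moranSet)
    {σ : List ℕ} (hσ : IsWord n σ) :
    μ2 (h '' (M1.J σ ∩ M1.moranSet)) ≤
      ENNReal.ofReal (2*C+2) * μ1 (M1.J σ ∩ M1.moranSet) := by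
  set k := σ.length with hk
  set ℓ : ℝ := ∏ j ∈ Finset.Icc 1 k, r j with hℓdef
  have hℓ : 0 < ℓ := prod_r_pos hr k
  rcases (h '' (M1.J σ ∩ M1.moranSet)).eq_empty_or_nonempty with he | ⟨y₀, x₀, hx₀, hy₀⟩
  · rw [he, measure_empty]; exact zero_le
  -- the image lies in an interval of length 2Cℓ
  have hdiam : Metric.diam (M1.J σ) = ℓ := M1.diam_J σ hσ
  obtain ⟨a1, b1, hab1, hJ1⟩ := M1.J_closedInterval σ hσ
  have himgI : h '' (M1.J σ ∩ M1.moranSet) ⊆ Set.Icc (y₀ - C*ℓ) (y₀ + C*ℓ) := by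
    rintro _ ⟨x, hx, rfl⟩
    have hd : |x - x₀| ≤ ℓ := by
      have hb : Bornology.IsBounded (M1.J σ) := hJ1 ▸ Metric.isBounded_Icc a1 b1
      have := Metric.dist_le_diam_of_mem hb hx.1 hx₀.1
      rwa [Real.dist_eq, hdiam] at this
    have hlx : |h x - h x₀| ≤ C * ℓ := by
      calc |h x - h x₀| ≤ C * |x - x₀| := hlip x hx.2 x₀ hx₀.2
        _ ≤ C * ℓ := mul_le_mul_of_nonneg_left hd (by linarith)
    rw [← hy₀]
    rw [abs_sub_le_iff] at hlx
    constructor <;> linarith [hlx.1, hlx.2]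
  -- the relevant rank-k cylinders of M2
  set T : Set (List ℕ) :=
    {τ | τ.length = k ∧ IsWord n τ ∧ (M2.J τ ∩ Set.Icc (y₀ - C*ℓ) (y₀ + C*ℓ)).Nonempty} with hT
  have hcover : h '' (M1.J σ ∩ M1.moranSet) ⊆ ⋃ τ ∈ T, (M2.J τ ∩ M2.moranSet) := by
    intro y hy
    have hy2 : y ∈ M2.moranSet := by
      apply him
      exact Set.image_mono (Set.inter_subset_right) hy
    obtain ⟨τ, hlen, hw, hmem⟩ := M2.exists_word_mem hy2 k
    have hyI : y ∈ Set.Icc (y₀ - C*ℓ) (y₀ + C*ℓ) := himgI hy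
    refine Set.mem_biUnion (show τ ∈ T from ⟨hlen, hw, ⟨y, hmem, hyI⟩⟩) ⟨hmem, hy2⟩
  -- each cylinder in T is an interval of length ℓ inside a fixed interval
  have hJτ : ∀ τ ∈ T, ∃ a : ℝ, M2.J τ = Set.Icc a (a + ℓ) ∧
      Set.Ioo a (a + ℓ) ⊆ Set.Ioo (y₀ - C*ℓ - ℓ) (y₀ + C*ℓ + ℓ) := by
    rintro τ ⟨hlen, hw, ⟨z, hz1, hz2⟩⟩
    obtain ⟨a, b, hab, hJ⟩ := M2.J_closedInterval τ hw
    have hd : b - a = ℓ := by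
      have := M2.diam_J τ hw
      rw [hJ, Real.diam_Icc hab, hlen] at this
      exact this
    have hb : b = a + ℓ := by linarith
    refine ⟨a, by rw [hJ, hb], ?_⟩
    have hz1' : z ∈ Set.Icc a b := hJ ▸ hz1
    intro w hw'
    constructor
    · have : y₀ - C*ℓ ≤ z := hz2.1
      have : z ≤ b := hz1'.2
      have : a ≥ y₀ - C*ℓ - ℓ := by linarith [hz1'.2, hz2.1]
      linarith [hw'.1]
    · have : a ≤ z := hz1'.1
      have : z ≤ y₀ + C*ℓ := hz2.2
      have : a + ℓ ≤ y₀ + C*ℓ + ℓ := by linarith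
      linarith [hw'.2]
  -- cardinality bound for finite subsets of T via Lebesgue measure
  have hcard : ∀ s : Finset (List ℕ), ↑s ⊆ T → (s.card : ℝ) * ℓ ≤ (2*C+2) * ℓ := by
    intro s hs
    have hdisj : (↑s : Set (List ℕ)).PairwiseDisjoint (fun τ => interior (M2.J τ)) := by
      intro τ hτ τ' hτ' hne
      obtain ⟨hlen, hw, _⟩ := hs hτ
      obtain ⟨hlen', hw', _⟩ := hs hτ'
      have h1 : ¬ τ <+: τ' := fun hp => hne (hp.eq_of_length (hlen.trans hlen'.symm))
      have h2 : ¬ τ' <+: τ := fun hp => hne (hp.eq_of_length (hlen'.trans hlen.symm)).symm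
      exact Set.disjoint_iff_inter_eq_empty.mpr (M2.interior_disjoint hw hw' h1 h2)
    have hmeas : ∀ τ ∈ s, MeasurableSet (interior (M2.J τ)) :=
      fun τ _ => isOpen_interior.measurableSet
    have hvol := measure_biUnion_finset (μ := volume) hdisj hmeas
    have hvol_each : ∀ τ ∈ s, volume (interior (M2.J τ)) = ENNReal.ofReal ℓ := by
      intro τ hτ
      obtain ⟨a, hJ, _⟩ := hJτ τ (hs hτ)
      rw [hJ, interior_Icc, Real.volume_Ioo]
      norm_num
    have hsub : (⋃ τ ∈ s, interior (M2.J τ)) ⊆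
        Set.Icc (y₀ - C*ℓ - ℓ) (y₀ + C*ℓ + ℓ) := by
      intro w hw'
      obtain ⟨τ, hτ, hmem⟩ := Set.mem_iUnion₂.mp hw'
      obtain ⟨a, hJ, hsub'⟩ := hJτ τ (hs hτ)
      rw [hJ, interior_Icc] at hmem
      exact Set.Ioo_subset_Icc_self (hsub' hmem)
    have hle : (s.card : ℝ≥0∞) * ENNReal.ofReal ℓ ≤ ENNReal.ofReal ((2*C+2)*ℓ) := by
      calc (s.card : ℝ≥0∞) * ENNReal.ofReal ℓ
          = ∑ τ ∈ s, volume (interior (M2.J τ)) := by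
            rw [Finset.sum_congr rfl hvol_each, Finset.sum_const, nsmul_eq_mul]
        _ = volume (⋃ τ ∈ s, interior (M2.J τ)) := hvol.symm
        _ ≤ volume (Set.Icc (y₀ - C*ℓ - ℓ) (y₀ + C*ℓ + ℓ)) := measure_mono hsub
        _ = ENNReal.ofReal ((2*C+2)*ℓ) := by
            rw [Real.volume_Icc]; congr 1; ring
    have hcast : ((s.card : ℝ≥0∞)) * ENNReal.ofReal ℓ = ENNReal.ofReal ((s.card : ℝ) * ℓ) := by
      rw [ENNReal.ofReal_mul (Nat.cast_nonneg _), ENNReal.ofReal_natCast]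
    rw [hcast] at hle
    have := (ENNReal.ofReal_le_ofReal_iff (mul_nonneg (by linarith) hℓ.le)).mp hle
    exact this
  -- T is finite with card at most 2C+2
  have hTfin : T.Finite := by
    by_contra hinf
    obtain ⟨s, hsT, hscard⟩ := (show T.Infinite from hinf).exists_subset_card_eq (⌈2*C+2⌉₊ + 1)
    have hthis := hcard s hsT
    have hcast : ((⌈2*C+2⌉₊ + 1 : ℕ) : ℝ) = (⌈2*C+2⌉₊ : ℝ) + 1 := by push_cast; ring
    rw [hscard, hcast] at hthis
    have h1 : (⌈2*C+2⌉₊ : ℝ) + 1 ≤ 2*C+2 := le_of_mul_le_mul_right hthis hℓ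
    have h2 : (2*C+2 : ℝ) ≤ ⌈2*C+2⌉₊ := Nat.le_ceil _
    linarith
  have hTcard : (hTfin.toFinset.card : ℝ) ≤ 2*C+2 := by
    have := hcard hTfin.toFinset (by simp)
    exact le_of_mul_le_mul_right this hℓ
  -- put the measure estimates together
  have hμ2cyl : ∀ τ ∈ hTfin.toFinset,
      μ2 (M2.J τ ∩ M2.moranSet) = 1 / ∏ j ∈ Finset.Icc 1 k, (n j : ℝ≥0∞) := by
    intro τ hτ
    obtain ⟨hlen, hw, _⟩ := hTfin.mem_toFinset.mp hτ
    rw [hμ2.2.2 τ hw, hlen]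
  calc μ2 (h '' (M1.J σ ∩ M1.moranSet))
      ≤ μ2 (⋃ τ ∈ hTfin.toFinset, (M2.J τ ∩ M2.moranSet)) := by
        apply measure_mono
        intro y hy
        obtain ⟨τ, hτ, hmem⟩ := Set.mem_iUnion₂.mp (hcover hy)
        exact Set.mem_iUnion₂.mpr ⟨τ, hTfin.mem_toFinset.mpr hτ, hmem⟩
    _ ≤ ∑ τ ∈ hTfin.toFinset, μ2 (M2.J τ ∩ M2.moranSet) :=
        measure_biUnion_finset_le _ _
    _ = (hTfin.toFinset.card : ℝ≥0∞) * (1 / ∏ j ∈ Finset.Icc 1 k, (n j : ℝ≥0∞)) := by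
        rw [Finset.sum_congr rfl hμ2cyl, Finset.sum_const, nsmul_eq_mul]
    _ ≤ ENNReal.ofReal (2*C+2) * (1 / ∏ j ∈ Finset.Icc 1 k, (n j : ℝ≥0∞)) := by
        apply mul_le_mul_left
        rw [← ENNReal.ofReal_natCast]
        exact ENNReal.ofReal_le_ofReal hTcard
    _ = ENNReal.ofReal (2*C+2) * μ1 (M1.J σ ∩ M1.moranSet) := by
        rw [hμ1.2.2 σ hσ]

end Aux4
section Aux5
variable {n : ℕ → ℕ} {r : ℕ → ℝ}

lemma prod_r_le_half_pow (hn : ∀ k ≥ 1, 2 ≤ n k) (hr : ∀ k ≥ 1, 0 < r k ∧ (n k : ℝ) * r k ≤ 1)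
    (k : ℕ) : ∏ j ∈ Finset.Icc 1 k, r j ≤ (1/2) ^ k := by
  have : ∏ j ∈ Finset.Icc 1 k, r j ≤ ∏ _j ∈ Finset.Icc 1 k, (1/2 : ℝ) := by
    apply Finset.prod_le_prod
    · exact fun j hj => (hr j (Finset.mem_Icc.mp hj).1).1.le
    · intro j hj
      have h1 := (hr j (Finset.mem_Icc.mp hj).1)
      have h2 : (2 : ℝ) ≤ (n j : ℝ) := by exact_mod_cast hn j (Finset.mem_Icc.mp hj).1
      nlinarith [h1.1, h1.2]
  calc ∏ j ∈ Finset.Icc 1 k, r j ≤ ∏ _j ∈ Finset.Icc 1 k, (1/2 : ℝ) := this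
    _ = (1/2) ^ k := by rw [Finset.prod_const, Nat.card_Icc]; norm_num

lemma open_push_le (hn : ∀ k ≥ 1, 2 ≤ n k) (hr : ∀ k ≥ 1, 0 < r k ∧ (n k : ℝ) * r k ≤ 1)
    (M1 M2 : MoranStructure n r) (μ1 μ2 : Measure ℝ)
    (hμ1 : IsUniformBernoulli M1 μ1) (hμ2 : IsUniformBernoulli M2 μ2)
    (C : ℝ) (hC : 1 ≤ C) (h : ℝ → ℝ)
    (hlip : ∀ x ∈ M1.moranSet, ∀ y ∈ M1.moranSet, |h x - h y| ≤ C * |x - y|)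
    (him : h '' M1.moranSet ⊆ M2.moranSet)
    (U : Set ℝ) (hU : IsOpen U) :
    μ2 (h '' (M1.moranSet ∩ U)) ≤ ENNReal.ofReal (2*C+2) * μ1 U := by
  classical
  set S : Set (List ℕ) := {σ | IsWord n σ ∧ M1.J σ ⊆ U} with hS
  set Smin : Set (List ℕ) := {σ ∈ S | ∀ p, p <+: σ → p ≠ σ → p ∉ S} with hSmin
  -- coverage
  have hcover : M1.moranSet ∩ U ⊆ ⋃ σ ∈ Smin, (M1.J σ ∩ M1.moranSet) := by
    rintro x ⟨hxE, hxU⟩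
    obtain ⟨ε, hε, hball⟩ := Metric.isOpen_iff.mp hU x hxU
    obtain ⟨k, hk⟩ := exists_pow_lt_of_lt_one hε (by norm_num : (1/2 : ℝ) < 1)
    obtain ⟨σ, hlen, hw, hxJ⟩ := M1.exists_word_mem hxE k
    have hσS : σ ∈ S := by
      refine ⟨hw, ?_⟩
      obtain ⟨a, b, hab, hJ⟩ := M1.J_closedInterval σ hw
      have hd : b - a < ε := by
        have h1 := M1.diam_J σ hw
        rw [hJ, Real.diam_Icc hab, hlen] at h1
        have := prod_r_le_half_pow hn hr k
        linarith
      intro w hwJ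
      apply hball
      rw [Metric.mem_ball, Real.dist_eq]
      rw [hJ] at hwJ hxJ
      rw [abs_sub_lt_iff]
      constructor <;> [linarith [hwJ.2, hxJ.1]; linarith [hwJ.1, hxJ.2]]
    -- pick a prefix of minimal length in S
    have hP : ∃ m : ℕ, ∃ p, p.length = m ∧ p <+: σ ∧ p ∈ S := ⟨σ.length, σ, rfl, List.prefix_refl σ, hσS⟩
    obtain ⟨p₀, hp₀len, hp₀pre, hp₀S⟩ := Nat.find_spec hP
    have hp₀min : p₀ ∈ Smin := by
      refine ⟨hp₀S, ?_⟩
      intro q hqp hqne hqS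
      have hqσ : q <+: σ := hqp.trans hp₀pre
      have hql : q.length < p₀.length := by
        rcases lt_or_eq_of_le hqp.length_le with hlt | heq
        · exact hlt
        · exact absurd (hqp.eq_of_length heq) hqne
      have := Nat.find_min hP (show q.length < Nat.find hP from hp₀len ▸ hql)
      exact this ⟨q, rfl, hqσ, hqS⟩
    have hxp₀ : x ∈ M1.J p₀ := by
      obtain ⟨t, htt⟩ := hp₀pre
      have := M1.J_prefix_subset t p₀ (htt ▸ hw)
      rw [htt] at this
      exact this hxJ
    exact Set.mem_biUnion hp₀min ⟨hxp₀, hxE⟩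
  -- pairwise incomparability on Smin
  have hinc : ∀ σ ∈ Smin, ∀ σ' ∈ Smin, σ ≠ σ' → ¬ σ <+: σ' := by
    rintro σ ⟨hσS, _⟩ σ' ⟨_, hσ'min⟩ hne hpre
    exact hσ'min σ hpre hne hσS
  have hcount : Smin.Countable := Set.to_countable _
  -- measure estimates
  have hmeas : ∀ σ ∈ Smin, MeasurableSet (M1.J σ ∩ M1.moranSet) := by
    rintro σ ⟨⟨hw, _⟩, _⟩
    obtain ⟨a, b, _, hJ⟩ := M1.J_closedInterval σ hw
    exact (hJ ▸ measurableSet_Icc).inter M1.measurable_moranSet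
  have hdisj : Smin.Pairwise (Function.onFun (MeasureTheory.AEDisjoint μ1) (fun σ => M1.J σ ∩ M1.moranSet)) := by
    intro σ hσ σ' hσ' hne
    have hw := hσ.1.1
    have hw' := hσ'.1.1
    exact cylinder_aedisjoint hμ1 hn hw hw' (hinc σ hσ σ' hσ' hne)
      (hinc σ' hσ' σ hσ (Ne.symm hne))
  have hsum := measure_biUnion₀ (μ := μ1) hcount hdisj
    (fun σ hσ => (hmeas σ hσ).nullMeasurableSet)
  calc μ2 (h '' (M1.moranSet ∩ U))
      ≤ μ2 (⋃ σ ∈ Smin, h '' (M1.J σ ∩ M1.moranSet)) := by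
        apply measure_mono
        intro y hy
        obtain ⟨x, hx, rfl⟩ := hy
        obtain ⟨σ, hσ, hxσ⟩ := Set.mem_iUnion₂.mp (hcover hx)
        exact Set.mem_biUnion hσ ⟨x, hxσ, rfl⟩
    _ ≤ ∑' σ : Smin, μ2 (h '' (M1.J σ ∩ M1.moranSet)) :=
        measure_biUnion_le μ2 hcount _
    _ ≤ ∑' σ : Smin, ENNReal.ofReal (2*C+2) * μ1 (M1.J σ ∩ M1.moranSet) := by
        apply ENNReal.tsum_le_tsum
        intro σ
        exact cylinder_push_le hn hr M1 M2 μ1 μ2 hμ1 hμ2 C hC h hlip him σ.2.1.1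
    _ = ENNReal.ofReal (2*C+2) * ∑' σ : Smin, μ1 (M1.J σ ∩ M1.moranSet) :=
        ENNReal.tsum_mul_left
    _ = ENNReal.ofReal (2*C+2) * μ1 (⋃ σ ∈ Smin, (M1.J σ ∩ M1.moranSet)) := by rw [hsum]
    _ ≤ ENNReal.ofReal (2*C+2) * μ1 U := by
        apply mul_le_mul_right
        apply measure_mono
        apply Set.iUnion₂_subset
        rintro σ ⟨⟨_, hJU⟩, _⟩
        exact (Set.inter_subset_left).trans hJU

lemma set_push_le (hn : ∀ k ≥ 1, 2 ≤ n k) (hr : ∀ k ≥ 1, 0 < r k ∧ (n k : ℝ) * r k ≤ 1)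
    (M1 M2 : MoranStructure n r) (μ1 μ2 : Measure ℝ)
    (hμ1 : IsUniformBernoulli M1 μ1) (hμ2 : IsUniformBernoulli M2 μ2)
    (C : ℝ) (hC : 1 ≤ C) (h : ℝ → ℝ)
    (hlip : ∀ x ∈ M1.moranSet, ∀ y ∈ M1.moranSet, |h x - h y| ≤ C * |x - y|)
    (him : h '' M1.moranSet ⊆ M2.moranSet)
    (A : Set ℝ) (hA : A ⊆ M1.moranSet) :
    μ2 (h '' A) ≤ ENNReal.ofReal (2*C+2) * μ1 A := by
  haveI : IsProbabilityMeasure μ1 := hμ1.1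
  set c : ℝ≥0∞ := ENNReal.ofReal (2*C+2) with hc
  have hc0 : c ≠ 0 := by
    rw [hc]; simp only [ne_eq, ENNReal.ofReal_eq_zero, not_le]; linarith
  have hctop : c ≠ ∞ := ENNReal.ofReal_ne_top
  apply ENNReal.le_of_forall_pos_le_add
  intro ε hε _
  have hδ : (ε : ℝ≥0∞) / c ≠ 0 := by
    simp only [ne_eq, ENNReal.div_eq_zero_iff, not_or]
    exact ⟨by exact_mod_cast hε.ne', hctop⟩
  obtain ⟨U, hAU, hUopen, hUlt⟩ := Set.exists_isOpen_lt_add A (measure_ne_top μ1 A) hδ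
  have h1 : μ2 (h '' A) ≤ c * μ1 U := by
    have hsub : A ⊆ M1.moranSet ∩ U := fun x hx => ⟨hA hx, hAU hx⟩
    calc μ2 (h '' A) ≤ μ2 (h '' (M1.moranSet ∩ U)) := measure_mono (Set.image_mono hsub)
      _ ≤ c * μ1 U := open_push_le hn hr M1 M2 μ1 μ2 hμ1 hμ2 C hC h hlip him U hUopen
  calc μ2 (h '' A) ≤ c * μ1 U := h1
    _ ≤ c * (μ1 A + (ε : ℝ≥0∞) / c) := mul_le_mul_right hUlt.le _
    _ = c * μ1 A + c * ((ε : ℝ≥0∞) / c) := mul_add _ _ _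
    _ = c * μ1 A + ε := by rw [ENNReal.mul_div_cancel hc0 hctop]

end Aux5
/-- **Theorem (equivalence of `f*ν` and `μ`).**
If `f : E → F` is a bi-Lipschitz map between homogeneous Moran sets with the same
parameters, then `f*ν` is equivalent to `μ` in the strong sense: there is `α > 0`
with `α⁻¹ μ(B) ≤ ν(f(B)) ≤ α μ(B)` for every Borel `B ⊆ E`. -/
theorem moran_pushforward_equivalent
    (n : ℕ → ℕ) (r : ℕ → ℝ)
    (hn : ∀ k ≥ 1, 2 ≤ n k)
    (hr : ∀ k ≥ 1, 0 < r k ∧ (n k : ℝ) * r k ≤ 1)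
    (ME MF : MoranStructure n r)
    (μ ν : Measure ℝ)
    (hμ : IsUniformBernoulli ME μ) (hν : IsUniformBernoulli MF ν)
    (C : ℝ) (hC : 1 ≤ C) (f : ℝ → ℝ)
    (hfbil : ∀ x ∈ ME.moranSet, ∀ y ∈ ME.moranSet,
      C⁻¹ * |x - y| ≤ |f x - f y| ∧ |f x - f y| ≤ C * |x - y|)
    (hfim : f '' ME.moranSet = MF.moranSet) :
    ∃ α : ℝ, 0 < α ∧
      ∀ B : Set ℝ, MeasurableSet B → B ⊆ ME.moranSet →
        ENNReal.ofReal α⁻¹ * μ B ≤ ν (f '' B) ∧ ν (f '' B) ≤ ENNReal.ofReal α * μ B := by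
  have hC0 : (0:ℝ) < C := by linarith
  refine ⟨2*C+2, by linarith, ?_⟩
  intro B _hB hBE
  have hflip : ∀ x ∈ ME.moranSet, ∀ y ∈ ME.moranSet, |f x - f y| ≤ C * |x - y| :=
    fun x hx y hy => (hfbil x hx y hy).2
  have hfim' : f '' ME.moranSet ⊆ MF.moranSet := hfim.le
  have hupper : ν (f '' B) ≤ ENNReal.ofReal (2*C+2) * μ B :=
    set_push_le hn hr ME MF μ ν hμ hν C hC f hflip hfim' B hBE
  have hinj : Set.InjOn f ME.moranSet := by
    intro x hx y hy hxy
    have h1 := (hfbil x hx y hy).1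
    rw [hxy, sub_self, abs_zero] at h1
    have hCinv : 0 < C⁻¹ := inv_pos.mpr hC0
    have habs : |x - y| = 0 := by nlinarith [abs_nonneg (x - y)]
    exact sub_eq_zero.mp (abs_eq_zero.mp habs)
  set g := Function.invFunOn f ME.moranSet with hg
  have hgf : ∀ x ∈ ME.moranSet, g (f x) = x := fun x hx => hinj.leftInvOn_invFunOn hx
  have hglip : ∀ u ∈ MF.moranSet, ∀ v ∈ MF.moranSet, |g u - g v| ≤ C * |u - v| := by
    intro u hu v hv
    rw [← hfim] at hu hv
    obtain ⟨x, hx, rfl⟩ := hu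
    obtain ⟨y, hy, rfl⟩ := hv
    rw [hgf x hx, hgf y hy]
    have h1 := (hfbil x hx y hy).1
    calc |x - y| = C * (C⁻¹ * |x - y|) := by field_simp
      _ ≤ C * |f x - f y| := mul_le_mul_of_nonneg_left h1 hC0.le
  have hgim : g '' MF.moranSet ⊆ ME.moranSet := by
    rintro _ ⟨u, hu, rfl⟩
    rw [← hfim] at hu
    obtain ⟨x, hx, rfl⟩ := hu
    rw [hgf x hx]; exact hx
  have hBsub : B ⊆ g '' (f '' B) := fun x hx =>
    ⟨f x, Set.mem_image_of_mem f hx, hgf x (hBE hx)⟩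
  have hfB : f '' B ⊆ MF.moranSet := hfim ▸ Set.image_mono hBE
  have hlow : μ B ≤ ENNReal.ofReal (2*C+2) * ν (f '' B) := by
    calc μ B ≤ μ (g '' (f '' B)) := measure_mono hBsub
      _ ≤ ENNReal.ofReal (2*C+2) * ν (f '' B) :=
        set_push_le hn hr MF ME ν μ hν hμ C hC g hglip hgim (f '' B) hfB
  refine ⟨?_, hupper⟩
  have hα : (0:ℝ) < 2*C+2 := by linarith
  calc ENNReal.ofReal (2*C+2)⁻¹ * μ B
      ≤ ENNReal.ofReal (2*C+2)⁻¹ * (ENNReal.ofReal (2*C+2) * ν (f '' B)) :=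
        mul_le_mul_right hlow _
    _ = (ENNReal.ofReal (2*C+2)⁻¹ * ENNReal.ofReal (2*C+2)) * ν (f '' B) :=
        (mul_assoc _ _ _).symm
    _ = ν (f '' B) := by
        rw [← ENNReal.ofReal_mul (inv_nonneg.mpr hα.le), inv_mul_cancel₀ hα.ne',
          ENNReal.ofReal_one, one_mul]
end

section
/- Let {J_σ : σ ∈ Σ*} be a homogeneous Moran structure with parameters ([0,1], {n_k}, {r_k}), where n_k ≥ 2 for all k, and let E be the associated homogeneous Moran set. Then there exists a unique Borel probability measure μ on ℝ such that μ(J_σ ∩ E) = 1/(n_1⋯n_k) for every k ≥ 0 and every σ ∈ Σ^k; moreover μ is concentrated on E and vanishes on singletons. -/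
open Set MeasureTheory
open scoped ENNReal

variable {n : ℕ → ℕ} {r : ℕ → ℝ}

namespace MoranAux

variable {n : ℕ → ℕ} {r : ℕ → ℝ}

theorem isWord_nil : IsWord n [] := fun i => absurd i.2 (by simp)

theorem isWord_concat {σ : List ℕ} {c : ℕ} :
    IsWord n (σ ++ [c]) ↔ IsWord n σ ∧ c < n (σ.length + 1) := by
  constructor
  · intro h
    constructor
    · intro i
      have := h ⟨i.1, by simp [List.length_append]⟩
      simpa [List.get_eq_getElem, List.getElem_append_left i.2] using this
    · have := h ⟨σ.length, by simp⟩
      simpa using this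
  · rintro ⟨h1, h2⟩ i
    rcases lt_or_ge (i : ℕ) σ.length with hi | hi
    · have := h1 ⟨i.1, hi⟩
      simpa [List.get_eq_getElem, List.getElem_append_left hi] using this
    · have hlen : (i : ℕ) = σ.length := by
        have := i.2; simp [List.length_append] at this; omega
      simp [List.get_eq_getElem, hlen]
      simpa [hlen] using h2

theorem word_induction {P : List ℕ → Prop} (h0 : P [])
    (hstep : ∀ σ c, IsWord n σ → c < n (σ.length + 1) → P σ → P (σ ++ [c])) :
    ∀ σ : List ℕ, IsWord n σ → P σ := by
  intro σ
  induction σ using List.reverseRecOn with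
  | nil => intro _; exact h0
  | append_singleton l a ih =>
    intro h
    rcases isWord_concat.1 h with ⟨h1, h2⟩
    exact hstep l a h1 h2 (ih h1)

theorem words_finite (n : ℕ → ℕ) : ∀ k : ℕ, {σ : List ℕ | σ.length = k ∧ IsWord n σ}.Finite := by
  intro k
  induction k with
  | zero =>
    apply Set.Finite.subset (Set.finite_singleton ([] : List ℕ))
    rintro σ ⟨h1, -⟩; simp [List.length_eq_zero_iff.1 h1]
  | succ k ih =>
    apply Set.Finite.subset (((ih.prod (Set.finite_Iio (n (k+1)))).image
      (fun p : List ℕ × ℕ => p.1 ++ [p.2])))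
    rintro σ ⟨h1, h2⟩
    have hne : σ ≠ [] := by intro h; simp [h] at h1
    have hσ : σ.dropLast ++ [σ.getLast hne] = σ := List.dropLast_append_getLast hne
    have hlen : σ.dropLast.length = k := by
      have := σ.length_dropLast; omega
    rw [← hσ] at h2
    rcases isWord_concat.1 h2 with ⟨hw, hc⟩
    exact ⟨⟨σ.dropLast, σ.getLast hne⟩, ⟨⟨hlen, hw⟩, by rw [hlen] at hc; exact hc⟩, hσ⟩

end MoranAux
namespace MoranAux
section Struct

variable {n : ℕ → ℕ} {r : ℕ → ℝ} (M : MoranStructure n r)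

noncomputable def aE (σ : List ℕ) : ℝ := sInf (M.J σ)
noncomputable def bE (σ : List ℕ) : ℝ := sSup (M.J σ)

theorem J_eq {σ : List ℕ} (hw : IsWord n σ) :
    aE M σ ≤ bE M σ ∧ M.J σ = Set.Icc (aE M σ) (bE M σ) := by
  obtain ⟨a, b, hab, hJ⟩ := M.J_closedInterval σ hw
  have ha : aE M σ = a := by rw [aE, hJ, csInf_Icc hab]
  have hb : bE M σ = b := by rw [bE, hJ, csSup_Icc hab]
  rw [ha, hb]; exact ⟨hab, hJ⟩

theorem diam_J : ∀ σ : List ℕ, IsWord n σ →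
    Metric.diam (M.J σ) = ∏ j ∈ Finset.Icc 1 σ.length, r j := by
  refine word_induction ?_ ?_
  · simp [M.J_empty, Real.diam_Icc (by norm_num : (0:ℝ) ≤ 1)]
  · intro σ c hσ hc ih
    rw [M.J_diam σ hσ c hc, ih]
    rw [List.length_append, List.length_singleton,
      Finset.prod_Icc_succ_top (Nat.le_add_left 1 σ.length)]
    ring

theorem rprod_pos (hr : ∀ k ≥ 1, 0 < r k ∧ (n k : ℝ) * r k ≤ 1) (k : ℕ) :
    0 < ∏ j ∈ Finset.Icc 1 k, r j :=
  Finset.prod_pos fun j hj => (hr j (Finset.mem_Icc.1 hj).1).1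

theorem rprod_le (hn : ∀ k ≥ 1, 2 ≤ n k) (hr : ∀ k ≥ 1, 0 < r k ∧ (n k : ℝ) * r k ≤ 1)
    (k : ℕ) : ∏ j ∈ Finset.Icc 1 k, r j ≤ (1/2 : ℝ)^k := by
  have h2 : ∀ j ∈ Finset.Icc 1 k, r j ≤ 1/2 := by
    intro j hj
    have h1 := (Finset.mem_Icc.1 hj).1
    have hnj : (2:ℝ) ≤ n j := by exact_mod_cast hn j h1
    have := (hr j h1).1
    nlinarith [(hr j h1).2]
  calc ∏ j ∈ Finset.Icc 1 k, r j ≤ ∏ j ∈ Finset.Icc 1 k, (1/2 : ℝ) :=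
        Finset.prod_le_prod (fun j hj => ((hr j (Finset.mem_Icc.1 hj).1).1).le) h2
    _ = (1/2:ℝ)^k := by rw [Finset.prod_const, Nat.card_Icc]; norm_num

theorem aE_lt_bE (hr : ∀ k ≥ 1, 0 < r k ∧ (n k : ℝ) * r k ≤ 1)
    {σ : List ℕ} (hw : IsWord n σ) : aE M σ < bE M σ := by
  obtain ⟨hab, hJ⟩ := J_eq M hw
  have hd : Metric.diam (M.J σ) = bE M σ - aE M σ := by rw [hJ, Real.diam_Icc hab]
  have := rprod_pos hr σ.length
  rw [diam_J M σ hw] at hd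
  linarith

theorem interior_disjoint : ∀ k : ℕ, ∀ σ τ : List ℕ, σ.length = k → τ.length = k →
    IsWord n σ → IsWord n τ → σ ≠ τ →
    interior (M.J σ) ∩ interior (M.J τ) = ∅ := by
  intro k
  induction k with
  | zero =>
    intro σ τ hσ hτ _ _ hne
    exact absurd (by rw [List.length_eq_zero_iff.1 hσ, List.length_eq_zero_iff.1 hτ]) hne
  | succ k ih =>
    intro σ τ hσl hτl hσ hτ hne
    have hσne : σ ≠ [] := by intro h; simp [h] at hσl
    have hτne : τ ≠ [] := by intro h; simp [h] at hτl
    obtain ⟨σ', c, rfl⟩ : ∃ σ' c, σ = σ' ++ [c] :=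
      ⟨σ.dropLast, σ.getLast hσne, (List.dropLast_append_getLast hσne).symm⟩
    obtain ⟨τ', d, rfl⟩ : ∃ τ' d, τ = τ' ++ [d] :=
      ⟨τ.dropLast, τ.getLast hτne, (List.dropLast_append_getLast hτne).symm⟩
    have hσ'l : σ'.length = k := by simp at hσl; omega
    have hτ'l : τ'.length = k := by simp at hτl; omega
    obtain ⟨hσ'w, hcw⟩ := isWord_concat.1 hσ
    obtain ⟨hτ'w, hdw⟩ := isWord_concat.1 hτ
    by_cases hst : σ' = τ'
    · subst hst
      have hcd : c ≠ d := by intro h; exact hne (by rw [h])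
      exact M.J_disjointInterior σ' hσ'w c hcw d hdw hcd
    · have h1 : interior (M.J (σ' ++ [c])) ⊆ interior (M.J σ') :=
        interior_mono (M.J_subset σ' hσ'w c hcw)
      have h2 : interior (M.J (τ' ++ [d])) ⊆ interior (M.J τ') :=
        interior_mono (M.J_subset τ' hτ'w d hdw)
      have := ih σ' τ' hσ'l hτ'l hσ'w hτ'w hst
      exact Set.eq_empty_of_subset_empty (this ▸ Set.inter_subset_inter h1 h2)

theorem inter_subsingleton {σ τ : List ℕ} (hσ : IsWord n σ) (hτ : IsWord n τ)
    (hl : σ.length = τ.length) (hne : σ ≠ τ) : (M.J σ ∩ M.J τ).Subsingleton := by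
  obtain ⟨habσ, hJσ⟩ := J_eq M hσ
  obtain ⟨habτ, hJτ⟩ := J_eq M hτ
  have hdisj := interior_disjoint M τ.length σ τ hl rfl hσ hτ hne
  have key : ∀ x y : ℝ, x ∈ M.J σ ∩ M.J τ → y ∈ M.J σ ∩ M.J τ → x < y → False := by
    intro x y hx hy hlt
    have hx1 : aE M σ ≤ x ∧ x ≤ bE M σ := by have := hx.1; rw [hJσ] at this; exact this
    have hx2 : aE M τ ≤ x ∧ x ≤ bE M τ := by have := hx.2; rw [hJτ] at this; exact this
    have hy1 : aE M σ ≤ y ∧ y ≤ bE M σ := by have := hy.1; rw [hJσ] at this; exact this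
    have hy2 : aE M τ ≤ y ∧ y ≤ bE M τ := by have := hy.2; rw [hJτ] at this; exact this
    have hzmem : (x + y)/2 ∈ interior (M.J σ) ∩ interior (M.J τ) := by
      constructor
      · rw [hJσ, interior_Icc]
        exact ⟨by obtain ⟨h1,h2⟩ := hx1; obtain ⟨h3,h4⟩ := hy1; linarith,
          by obtain ⟨h1,h2⟩ := hx1; obtain ⟨h3,h4⟩ := hy1; linarith⟩
      · rw [hJτ, interior_Icc]
        exact ⟨by obtain ⟨h1,h2⟩ := hx2; obtain ⟨h3,h4⟩ := hy2; linarith,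
          by obtain ⟨h1,h2⟩ := hx2; obtain ⟨h3,h4⟩ := hy2; linarith⟩
    rw [hdisj] at hzmem
    exact hzmem
  intro x hx y hy
  by_contra hxy
  rcases lt_trichotomy x y with h | h | h
  · exact key x y hx hy h
  · exact hxy h
  · exact key y x hy hx h

theorem left_right_subsingleton (p : ℝ) (k : ℕ) :
    {σ : List ℕ | σ.length = k ∧ IsWord n σ ∧ p ∈ M.J σ ∧ aE M σ < p}.Subsingleton ∧
    {σ : List ℕ | σ.length = k ∧ IsWord n σ ∧ p ∈ M.J σ ∧ p < bE M σ}.Subsingleton := by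
  constructor
  · rintro σ ⟨hσl, hσw, hσp, hσa⟩ τ ⟨hτl, hτw, hτp, hτa⟩
    by_contra hne
    have hdisj := interior_disjoint M k σ τ hσl hτl hσw hτw hne
    obtain ⟨habσ, hJσ⟩ := J_eq M hσw
    obtain ⟨habτ, hJτ⟩ := J_eq M hτw
    rw [hJσ] at hσp; rw [hJτ] at hτp
    obtain ⟨h1σ, h2σ⟩ := hσp
    obtain ⟨h1τ, h2τ⟩ := hτp
    have hmax := max_lt hσa hτa
    have hzmem : (max (aE M σ) (aE M τ) + p)/2 ∈ interior (M.J σ) ∩ interior (M.J τ) := by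
      constructor
      · rw [hJσ, interior_Icc]
        exact ⟨by have := le_max_left (aE M σ) (aE M τ); linarith,
          by have := le_max_left (aE M σ) (aE M τ); linarith⟩
      · rw [hJτ, interior_Icc]
        exact ⟨by have := le_max_right (aE M σ) (aE M τ); linarith,
          by have := le_max_right (aE M σ) (aE M τ); linarith⟩
    rw [hdisj] at hzmem
    exact hzmem
  · rintro σ ⟨hσl, hσw, hσp, hσa⟩ τ ⟨hτl, hτw, hτp, hτa⟩
    by_contra hne
    have hdisj := interior_disjoint M k σ τ hσl hτl hσw hτw hne
    obtain ⟨habσ, hJσ⟩ := J_eq M hσw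
    obtain ⟨habτ, hJτ⟩ := J_eq M hτw
    rw [hJσ] at hσp; rw [hJτ] at hτp
    obtain ⟨h1σ, h2σ⟩ := hσp
    obtain ⟨h1τ, h2τ⟩ := hτp
    have hmin := lt_min hσa hτa
    have hzmem : (p + min (bE M σ) (bE M τ))/2 ∈ interior (M.J σ) ∩ interior (M.J τ) := by
      constructor
      · rw [hJσ, interior_Icc]
        exact ⟨by have := min_le_left (bE M σ) (bE M τ); linarith,
          by have := min_le_left (bE M σ) (bE M τ); linarith⟩
      · rw [hJτ, interior_Icc]
        exact ⟨by have := min_le_right (bE M σ) (bE M τ); linarith,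
          by have := min_le_right (bE M σ) (bE M τ); linarith⟩
    rw [hdisj] at hzmem
    exact hzmem

theorem mem_split (hr : ∀ k ≥ 1, 0 < r k ∧ (n k : ℝ) * r k ≤ 1)
    {σ : List ℕ} (hw : IsWord n σ) {p : ℝ} (hp : p ∈ M.J σ) :
    aE M σ < p ∨ p < bE M σ := by
  have := aE_lt_bE M hr hw
  obtain ⟨hab, hJ⟩ := J_eq M hw
  rw [hJ] at hp
  rcases lt_or_ge (aE M σ) p with h | h
  · exact Or.inl h
  · exact Or.inr (lt_of_le_of_lt h this)

end Struct
end MoranAux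
namespace MoranAux
section Digits

variable (n : ℕ → ℕ)

noncomputable def Tmap : ℕ → ℝ → ℝ
  | 0, t => t
  | (k+1), t => (n (k+1) : ℝ) * Tmap k t - ⌊(n (k+1) : ℝ) * Tmap k t⌋₊

noncomputable def dgt (k : ℕ) (t : ℝ) : ℕ := ⌊(n (k+1) : ℝ) * Tmap n k t⌋₊

noncomputable def wrd (k : ℕ) (t : ℝ) : List ℕ := List.ofFn (fun i : Fin k => dgt n i t)

theorem wrd_zero (t : ℝ) : wrd n 0 t = [] := rfl

theorem wrd_length (k : ℕ) (t : ℝ) : (wrd n k t).length = k := List.length_ofFn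

theorem wrd_succ (k : ℕ) (t : ℝ) : wrd n (k+1) t = wrd n k t ++ [dgt n k t] := by
  rw [wrd, List.ofFn_succ', List.concat_eq_append]
  rfl

noncomputable def Nr (k : ℕ) : ℝ := ∏ j ∈ Finset.Icc 1 k, (n j : ℝ)

theorem Nr_zero : Nr n 0 = 1 := by simp [Nr]

theorem Nr_succ (k : ℕ) : Nr n (k+1) = Nr n k * n (k+1) :=
  Finset.prod_Icc_succ_top (Nat.le_add_left 1 k) _

variable {n}

theorem Nr_pos (hn : ∀ k ≥ 1, 2 ≤ n k) (k : ℕ) : 0 < Nr n k :=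
  Finset.prod_pos fun j hj => by
    have := hn j (Finset.mem_Icc.1 hj).1; positivity

theorem Nr_ge (hn : ∀ k ≥ 1, 2 ≤ n k) (k : ℕ) : (2:ℝ)^k ≤ Nr n k := by
  have hcard : (2:ℝ)^k = ∏ _j ∈ Finset.Icc 1 k, (2:ℝ) := by
    rw [Finset.prod_const, Nat.card_Icc]; norm_num
  rw [Nr, hcard]
  apply Finset.prod_le_prod (fun _ _ => by norm_num)
  intro j hj
  exact_mod_cast hn j (Finset.mem_Icc.1 hj).1

theorem one_div_Nr_le (hn : ∀ k ≥ 1, 2 ≤ n k) (k : ℕ) : 1 / Nr n k ≤ (1/2:ℝ)^k := by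
  rw [div_pow, one_pow]
  exact one_div_le_one_div_of_le (by positivity) (Nr_ge hn k)

variable (n)

noncomputable def anchor (σ : List ℕ) : ℝ :=
  ∑ i ∈ Finset.range σ.length, (σ.getD i 0 : ℝ) / Nr n (i+1)

theorem anchor_nil : anchor n [] = 0 := by simp [anchor]

theorem anchor_concat (σ : List ℕ) (c : ℕ) :
    anchor n (σ ++ [c]) = anchor n σ + (c : ℝ) / Nr n (σ.length + 1) := by
  rw [anchor, anchor]
  simp only [List.length_append, List.length_singleton]
  rw [Finset.sum_range_succ]
  congr 1
  · apply Finset.sum_congr rfl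
    intro i hi
    rw [List.getD_append _ _ _ _ (Finset.mem_range.1 hi)]
  · rw [List.getD_append_right _ _ _ _ le_rfl]
    simp

end Digits
end MoranAux
namespace MoranAux
section Digits2

variable {n : ℕ → ℕ}

theorem anchor_bounds (hn : ∀ k ≥ 1, 2 ≤ n k) :
    ∀ σ : List ℕ, IsWord n σ →
      0 ≤ anchor n σ ∧ anchor n σ + 1 / Nr n σ.length ≤ 1 := by
  refine word_induction ?_ ?_
  · rw [anchor_nil]; norm_num [Nr_zero]
  · intro σ c hσ hc ⟨ih0, ih1⟩
    have hN := Nr_pos hn σ.length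
    have hN' := Nr_pos hn (σ.length + 1)
    have hNs := Nr_succ n σ.length
    have hm : (2:ℝ) ≤ n (σ.length + 1) := by exact_mod_cast hn _ (Nat.le_add_left 1 _)
    rw [anchor_concat]
    constructor
    · have : (0:ℝ) ≤ (c:ℝ) / Nr n (σ.length+1) := by positivity
      linarith
    · simp only [List.length_append, List.length_singleton]
      have hc1 : (c:ℝ) + 1 ≤ (n (σ.length + 1) : ℝ) := by exact_mod_cast hc
      have key : (c:ℝ) / Nr n (σ.length+1) + 1 / Nr n (σ.length+1) ≤ 1 / Nr n σ.length := by
        rw [← add_div, hNs]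
        rw [div_le_div_iff₀ (by rw [← hNs]; exact hN') hN]
        have hnn : (0:ℝ) < (n (σ.length+1):ℝ) := by linarith
        calc ((c:ℝ)+1) * Nr n σ.length ≤ (n (σ.length + 1):ℝ) * Nr n σ.length := by
              apply mul_le_mul_of_nonneg_right hc1 hN.le
          _ = 1 * (Nr n σ.length * (n (σ.length+1):ℝ)) := by ring
      linarith

set_option maxHeartbeats 1000000 in
theorem digits_main (hn : ∀ k ≥ 1, 2 ≤ n k) :
    ∀ k : ℕ, ∀ t : ℝ, 0 ≤ t → t < 1 →
      IsWord n (wrd n k t) ∧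
      (0 ≤ Tmap n k t ∧ Tmap n k t < 1) ∧
      Tmap n k t = Nr n k * (t - anchor n (wrd n k t)) ∧
      (∀ σ : List ℕ, σ.length = k → IsWord n σ →
        (wrd n k t = σ ↔ anchor n σ ≤ t ∧ t < anchor n σ + 1 / Nr n k)) := by
  intro k
  induction k with
  | zero =>
    intro t ht0 ht1
    refine ⟨isWord_nil, ⟨ht0, ht1⟩, by simp [Tmap, wrd_zero, anchor_nil, Nr_zero], ?_⟩
    intro σ hlen _
    rw [List.length_eq_zero_iff.1 hlen, wrd_zero, anchor_nil, Nr_zero]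
    simp only [zero_add, true_iff]
    constructor <;> [exact ht0; simpa using ht1]
  | succ k ih =>
    intro t ht0 ht1
    obtain ⟨hw, ⟨hT0, hT1⟩, hTeq, hiff⟩ := ih t ht0 ht1
    set T := Tmap n k t with hT
    set a := anchor n (wrd n k t) with ha
    set N := Nr n k with hN
    set m := n (k + 1) with hm
    have hNpos : 0 < N := Nr_pos hn k
    have hmR : (2:ℝ) ≤ (m : ℝ) := by exact_mod_cast hn (k+1) (Nat.le_add_left 1 k)
    have hmpos : (0:ℝ) < m := by linarith
    have hN' : Nr n (k+1) = N * m := Nr_succ n k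
    have hN'pos : 0 < N * m := by positivity
    have hmT0 : (0:ℝ) ≤ (m:ℝ) * T := by positivity
    have hd_lt : dgt n k t < m := by
      rw [dgt, ← hT, ← hm]
      rw [Nat.floor_lt hmT0]
      calc (m:ℝ) * T < (m:ℝ) * 1 := by apply mul_lt_mul_of_pos_left hT1 hmpos
        _ = m := by ring
    have hword : IsWord n (wrd n (k+1) t) := by
      rw [wrd_succ]
      exact isWord_concat.2 ⟨hw, by rw [wrd_length]; exact hd_lt⟩
    have hTsucc : Tmap n (k+1) t = (m:ℝ) * T - (dgt n k t : ℝ) := by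
      rw [Tmap, dgt]
    have hTs0 : 0 ≤ Tmap n (k+1) t := by
      rw [hTsucc, dgt, ← hT, ← hm]
      have := Nat.floor_le hmT0
      linarith
    have hTs1 : Tmap n (k+1) t < 1 := by
      rw [hTsucc, dgt, ← hT, ← hm]
      have := Nat.lt_floor_add_one ((m:ℝ) * T)
      linarith
    have hanchor_succ : anchor n (wrd n (k+1) t) = a + (dgt n k t : ℝ) / (N * m) := by
      rw [wrd_succ, anchor_concat, wrd_length, hN']
    have hTeq' : Tmap n (k+1) t = Nr n (k+1) * (t - anchor n (wrd n (k+1) t)) := by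
      rw [hTsucc, hanchor_succ, hN', hTeq]
      field_simp
      ring
    refine ⟨hword, ⟨hTs0, hTs1⟩, hTeq', ?_⟩
    -- the cylinder characterization
    intro σ hlen hσw
    have hσne : σ ≠ [] := by intro h; simp [h] at hlen
    obtain ⟨σ', c, rfl⟩ : ∃ σ' c, σ = σ' ++ [c] :=
      ⟨σ.dropLast, σ.getLast hσne, (List.dropLast_append_getLast hσne).symm⟩
    have hσ'l : σ'.length = k := by simp at hlen; omega
    obtain ⟨hσ'w, hcw⟩ := isWord_concat.1 hσw
    rw [hσ'l] at hcw
    have hcR : (c:ℝ) + 1 ≤ (m:ℝ) := by exact_mod_cast hcw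
    have hanchor_cat : anchor n (σ' ++ [c]) = anchor n σ' + (c:ℝ) / (N * m) := by
      rw [anchor_concat, hσ'l, hN', hN, hm]
    rw [hanchor_cat, hN']
    constructor
    · intro heq
      rw [wrd_succ] at heq
      have hlen2 : (wrd n k t).length = σ'.length := by rw [wrd_length, hσ'l]
      obtain ⟨heq1, heq2⟩ := List.append_inj heq hlen2
      have hceq : dgt n k t = c := by simpa using heq2
      have hprev : anchor n σ' ≤ t ∧ t < anchor n σ' + 1 / N :=
        (hiff σ' hσ'l hσ'w).1 heq1
      have haeq : a = anchor n σ' := by rw [ha, heq1]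
      -- floor bounds : c ≤ m*T < c+1
      have hfl : (c:ℝ) ≤ (m:ℝ) * T ∧ (m:ℝ) * T < (c:ℝ) + 1 := by
        rw [← hceq]
        have h1 := Nat.floor_le hmT0
        have h2 := Nat.lt_floor_add_one ((m:ℝ) * T)
        rw [dgt, ← hT, ← hm]
        exact ⟨h1, by exact_mod_cast h2⟩
      rw [hTeq, haeq] at hfl
      have hdd : (c:ℝ)/(N*(m:ℝ)) + 1/(N*(m:ℝ)) = ((c:ℝ)+1)/(N*(m:ℝ)) := (add_div _ _ _).symm
      constructor
      · have h1 : (c:ℝ) / (N*(m:ℝ)) ≤ t - anchor n σ' := by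
          rw [div_le_iff₀ hN'pos]
          nlinarith [hfl.1]
        linarith
      · have h2 : t - anchor n σ' < ((c:ℝ)+1)/(N*(m:ℝ)) := by
          rw [lt_div_iff₀ hN'pos]
          nlinarith [hfl.2]
        linarith
    · rintro ⟨hlow, hhigh⟩
      have hc0 : (0:ℝ) ≤ (c:ℝ) / (N*m) := by positivity
      have hprev : wrd n k t = σ' := by
        apply (hiff σ' hσ'l hσ'w).2
        constructor
        · linarith
        · have : (c:ℝ)/(N*m) + 1/(N*m) ≤ 1/N := by
            rw [← add_div, div_le_div_iff₀ hN'pos hNpos]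
            nlinarith
          linarith
      have haeq : a = anchor n σ' := by rw [ha, hprev]
      rw [haeq] at hTeq
      have hl1 : (c:ℝ) ≤ (N*(m:ℝ)) * (t - anchor n σ') := by
        have : (c:ℝ) / (N*(m:ℝ)) ≤ t - anchor n σ' := by linarith
        rw [div_le_iff₀ hN'pos] at this
        nlinarith
      have hl2 : (N*(m:ℝ)) * (t - anchor n σ') < (c:ℝ) + 1 := by
        have hdd : (c:ℝ)/(N*(m:ℝ)) + 1/(N*(m:ℝ)) = ((c:ℝ)+1)/(N*(m:ℝ)) := (add_div _ _ _).symm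
        have : t - anchor n σ' < ((c:ℝ)+1) / (N*(m:ℝ)) := by linarith
        rw [lt_div_iff₀ hN'pos] at this
        nlinarith
      have hceq : dgt n k t = c := by
        rw [dgt, ← hT, ← hm]
        rw [Nat.floor_eq_iff hmT0]
        refine ⟨by rw [hTeq]; nlinarith, by rw [hTeq]; nlinarith⟩
      rw [wrd_succ, hprev, hceq]

end Digits2
end MoranAux
namespace MoranAux
section Map

variable {n : ℕ → ℕ} {r : ℕ → ℝ} (M : MoranStructure n r)

noncomputable def cylSet (n : ℕ → ℕ) (k : ℕ) (σ : List ℕ) : Set ℝ :=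
  {t | wrd n k t = σ} ∩ Set.Ico 0 1

theorem cyl_eq (hn : ∀ k ≥ 1, 2 ≤ n k) {k : ℕ} {σ : List ℕ}
    (hlen : σ.length = k) (hσ : IsWord n σ) :
    cylSet n k σ = Set.Ico (anchor n σ) (anchor n σ + 1 / Nr n k) := by
  have hab := anchor_bounds hn σ hσ
  rw [hlen] at hab
  have hNpos := Nr_pos hn k
  ext t
  constructor
  · rintro ⟨h1, h2⟩
    exact (((digits_main hn k t h2.1 h2.2).2.2.2) σ hlen hσ).1 h1
  · intro ht
    have ht0 : (0:ℝ) ≤ t := le_trans hab.1 ht.1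
    have ht1 : t < 1 := lt_of_lt_of_le ht.2 hab.2
    exact ⟨(((digits_main hn k t ht0 ht1).2.2.2) σ hlen hσ).2 ht, ht0, ht1⟩

theorem cyl_volume (hn : ∀ k ≥ 1, 2 ≤ n k) {k : ℕ} {σ : List ℕ}
    (hlen : σ.length = k) (hσ : IsWord n σ) :
    volume (cylSet n k σ) = ENNReal.ofReal (1 / Nr n k) := by
  rw [cyl_eq hn hlen hσ, Real.volume_Ico]
  ring_nf

theorem cyl_measurableSet (hn : ∀ k ≥ 1, 2 ≤ n k) {k : ℕ} {σ : List ℕ}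
    (hlen : σ.length = k) (hσ : IsWord n σ) : MeasurableSet (cylSet n k σ) := by
  rw [cyl_eq hn hlen hσ]; exact measurableSet_Ico

theorem wrd_isWord (hn : ∀ k ≥ 1, 2 ≤ n k) (k : ℕ) {t : ℝ} (ht0 : 0 ≤ t) (ht1 : t < 1) :
    IsWord n (wrd n k t) := (digits_main hn k t ht0 ht1).1

theorem dgt_lt (hn : ∀ k ≥ 1, 2 ≤ n k) (k : ℕ) {t : ℝ} (ht0 : 0 ≤ t) (ht1 : t < 1) :
    dgt n k t < n (k + 1) := by
  obtain ⟨-, ⟨hT0, hT1⟩, -, -⟩ := digits_main hn k t ht0 ht1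
  have hm : (2:ℝ) ≤ (n (k+1) : ℝ) := by exact_mod_cast hn (k+1) (Nat.le_add_left 1 k)
  rw [dgt, Nat.floor_lt (by positivity)]
  nlinarith

noncomputable def fmap (k : ℕ) (t : ℝ) : ℝ := aE M (wrd n k t)

theorem measurable_Tmap : ∀ k : ℕ, Measurable (Tmap n k) := by
  intro k
  induction k with
  | zero => exact measurable_id
  | succ k ih =>
    have hg : Measurable (fun t => (n (k+1) : ℝ) * Tmap n k t) := measurable_const.mul ih
    have hcast : Measurable (fun x : ℕ => (x : ℝ)) := measurable_of_countable _
    exact hg.sub (hcast.comp (Nat.measurable_floor.comp hg))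

theorem measurable_dgt (k : ℕ) : Measurable (dgt n k) :=
  Nat.measurable_floor.comp (measurable_const.mul (measurable_Tmap k))

theorem measurable_fmap (k : ℕ) : Measurable (fmap M k) := by
  have h1 : Measurable (fun t => (fun i : Fin k => dgt n i t)) :=
    measurable_pi_lambda _ fun i => measurable_dgt i
  have h2 : Measurable (fun v : Fin k → ℕ => aE M (List.ofFn v)) := measurable_of_countable _
  exact h2.comp h1

theorem fmap_mem (hn : ∀ k ≥ 1, 2 ≤ n k) (k : ℕ) {t : ℝ} (ht0 : 0 ≤ t) (ht1 : t < 1) :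
    fmap M k t ∈ M.J (wrd n k t) := by
  obtain ⟨hab, hJ⟩ := J_eq M (wrd_isWord hn k ht0 ht1)
  rw [hJ]
  exact ⟨le_refl _, hab⟩

theorem J_wrd_succ (hn : ∀ k ≥ 1, 2 ≤ n k) (k : ℕ) {t : ℝ} (ht0 : 0 ≤ t) (ht1 : t < 1) :
    M.J (wrd n (k+1) t) ⊆ M.J (wrd n k t) := by
  rw [wrd_succ]
  have := M.J_subset (wrd n k t) (wrd_isWord hn k ht0 ht1) (dgt n k t)
    (by rw [wrd_length]; exact dgt_lt hn k ht0 ht1)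
  exact this

theorem J_wrd_mono (hn : ∀ k ≥ 1, 2 ≤ n k) {k m : ℕ} (hkm : k ≤ m) {t : ℝ}
    (ht0 : 0 ≤ t) (ht1 : t < 1) : M.J (wrd n m t) ⊆ M.J (wrd n k t) := by
  induction m with
  | zero => rw [Nat.le_zero.1 hkm]
  | succ m ih =>
    rcases Nat.lt_or_ge k (m+1) with h | h
    · exact le_trans (J_wrd_succ M hn m ht0 ht1) (ih (Nat.lt_succ_iff.1 h))
    · have : k = m + 1 := le_antisymm hkm h
      rw [this]

theorem fmap_mem_of_le (hn : ∀ k ≥ 1, 2 ≤ n k) {k m : ℕ} (hkm : k ≤ m) {t : ℝ}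
    (ht0 : 0 ≤ t) (ht1 : t < 1) : fmap M m t ∈ M.J (wrd n k t) :=
  J_wrd_mono M hn hkm ht0 ht1 (fmap_mem M hn m ht0 ht1)

theorem diam_le (hn : ∀ k ≥ 1, 2 ≤ n k) (hr : ∀ k ≥ 1, 0 < r k ∧ (n k : ℝ) * r k ≤ 1)
    {σ : List ℕ} (hσ : IsWord n σ) : Metric.diam (M.J σ) ≤ (1/2:ℝ)^σ.length := by
  rw [diam_J M σ hσ]
  exact rprod_le hn hr σ.length

theorem isBounded_J {σ : List ℕ} (hσ : IsWord n σ) : Bornology.IsBounded (M.J σ) := by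
  obtain ⟨-, hJ⟩ := J_eq M hσ
  rw [hJ]; exact Metric.isBounded_Icc _ _

theorem cauchy_fmap (hn : ∀ k ≥ 1, 2 ≤ n k) (hr : ∀ k ≥ 1, 0 < r k ∧ (n k : ℝ) * r k ≤ 1)
    {t : ℝ} (ht0 : 0 ≤ t) (ht1 : t < 1) : CauchySeq (fun k => fmap M k t) := by
  apply cauchySeq_of_le_geometric (1/2 : ℝ) 1 (by norm_num)
  intro k
  have h1 : fmap M k t ∈ M.J (wrd n k t) := fmap_mem M hn k ht0 ht1
  have h2 : fmap M (k+1) t ∈ M.J (wrd n k t) := fmap_mem_of_le M hn (Nat.le_succ k) ht0 ht1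
  calc dist (fmap M k t) (fmap M (k+1) t) ≤ Metric.diam (M.J (wrd n k t)) :=
        Metric.dist_le_diam_of_mem (isBounded_J M (wrd_isWord hn k ht0 ht1)) h1 h2
    _ ≤ (1/2:ℝ)^(wrd n k t).length := diam_le M hn hr (wrd_isWord hn k ht0 ht1)
    _ = 1 * (1/2:ℝ)^k := by rw [wrd_length]; ring

noncomputable def flim (t : ℝ) : ℝ := Filter.limUnder Filter.atTop (fun k => fmap M k t)

theorem tendsto_flim (hn : ∀ k ≥ 1, 2 ≤ n k) (hr : ∀ k ≥ 1, 0 < r k ∧ (n k : ℝ) * r k ≤ 1)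
    {t : ℝ} (ht0 : 0 ≤ t) (ht1 : t < 1) :
    Filter.Tendsto (fun k => fmap M k t) Filter.atTop (nhds (flim M t)) :=
  (cauchy_fmap M hn hr ht0 ht1).tendsto_limUnder

theorem flim_mem_J (hn : ∀ k ≥ 1, 2 ≤ n k) (hr : ∀ k ≥ 1, 0 < r k ∧ (n k : ℝ) * r k ≤ 1)
    {t : ℝ} (ht0 : 0 ≤ t) (ht1 : t < 1) (k : ℕ) : flim M t ∈ M.J (wrd n k t) := by
  obtain ⟨hab, hJ⟩ := J_eq M (wrd_isWord hn k ht0 ht1)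
  have hcl : IsClosed (M.J (wrd n k t)) := by rw [hJ]; exact isClosed_Icc
  apply hcl.mem_of_tendsto (tendsto_flim M hn hr ht0 ht1)
  filter_upwards [Filter.eventually_ge_atTop k] with m hm
  exact fmap_mem_of_le M hn hm ht0 ht1

theorem flim_mem_E (hn : ∀ k ≥ 1, 2 ≤ n k) (hr : ∀ k ≥ 1, 0 < r k ∧ (n k : ℝ) * r k ≤ 1)
    {t : ℝ} (ht0 : 0 ≤ t) (ht1 : t < 1) : flim M t ∈ M.moranSet := by
  rw [MoranStructure.moranSet, Set.mem_iInter]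
  intro k
  rw [MoranStructure.approx]
  exact Set.mem_biUnion ⟨wrd_length n k t, wrd_isWord hn k ht0 ht1⟩
    (flim_mem_J M hn hr ht0 ht1 k)

theorem aemeasurable_flim (hn : ∀ k ≥ 1, 2 ≤ n k)
    (hr : ∀ k ≥ 1, 0 < r k ∧ (n k : ℝ) * r k ≤ 1) :
    AEMeasurable (flim M) (volume.restrict (Set.Ico (0:ℝ) 1)) := by
  apply aemeasurable_of_tendsto_metrizable_ae Filter.atTop
    (fun k => (measurable_fmap M k).aemeasurable)
  rw [MeasureTheory.ae_restrict_iff' measurableSet_Ico]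
  exact MeasureTheory.ae_of_all _ fun t ht => tendsto_flim M hn hr ht.1 ht.2

end Map
end MoranAux
namespace MoranAux
section Meas

variable {n : ℕ → ℕ} {r : ℕ → ℝ} (M : MoranStructure n r)

theorem measurableSet_J {σ : List ℕ} (hσ : IsWord n σ) : MeasurableSet (M.J σ) := by
  rw [(J_eq M hσ).2]; exact measurableSet_Icc

theorem measurableSet_moranSet : MeasurableSet M.moranSet := by
  apply MeasurableSet.iInter
  intro k
  exact MeasurableSet.biUnion (Set.to_countable _) fun σ hσ => measurableSet_J M hσ.2

theorem null_of_subsingleton {μ : Measure ℝ} (hμ : ∀ x : ℝ, μ {x} = 0)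
    {s : Set ℝ} (hs : s.Subsingleton) : μ s = 0 := by
  rcases hs.eq_empty_or_singleton with h | ⟨x, h⟩
  · rw [h]; exact measure_empty
  · rw [h]; exact hμ x

theorem null_of_countable {μ : Measure ℝ} (hμ : ∀ x : ℝ, μ {x} = 0)
    {s : Set ℝ} (hs : s.Countable) : μ s = 0 := by
  have : s = ⋃ x ∈ s, {x} := by simp
  rw [this]
  exact (measure_biUnion_null_iff hs).2 fun x _ => hμ x

theorem ofReal_Nr (hn : ∀ k ≥ 1, 2 ≤ n k) (k : ℕ) :
    ENNReal.ofReal (1 / Nr n k) = 1 / ∏ j ∈ Finset.Icc 1 k, (n j : ℝ≥0∞) := by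
  have h1 : Nr n k = ((∏ j ∈ Finset.Icc 1 k, n j : ℕ) : ℝ) := by
    rw [Nr, Nat.cast_prod]
  have h2 : ∏ j ∈ Finset.Icc 1 k, (n j : ℝ≥0∞) = ((∏ j ∈ Finset.Icc 1 k, n j : ℕ) : ℝ≥0∞) := by
    rw [Nat.cast_prod]
  have hpos : (0:ℝ) < ((∏ j ∈ Finset.Icc 1 k, n j : ℕ) : ℝ) := by rw [← h1]; exact Nr_pos hn k
  rw [h1, h2, one_div, one_div, ENNReal.ofReal_inv_of_pos hpos, ENNReal.ofReal_natCast]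

theorem vol_biUnion_subsingleton (hn : ∀ k ≥ 1, 2 ≤ n k) {k : ℕ} {S : Set (List ℕ)}
    (hS : S.Subsingleton) (hSw : ∀ σ ∈ S, σ.length = k ∧ IsWord n σ) :
    volume (⋃ σ ∈ S, cylSet n k σ) ≤ ENNReal.ofReal (1 / Nr n k) := by
  rcases hS.eq_empty_or_singleton with h | ⟨σ, h⟩
  · rw [h]; simp
  · rw [h]
    simp only [Set.mem_singleton_iff, Set.iUnion_iUnion_eq_left]
    obtain ⟨h1, h2⟩ := hSw σ (h ▸ rfl)
    rw [cyl_volume hn h1 h2]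

theorem fiber_vol_zero (hn : ∀ k ≥ 1, 2 ≤ n k) (hr : ∀ k ≥ 1, 0 < r k ∧ (n k : ℝ) * r k ≤ 1)
    (p : ℝ) : volume ((flim M ⁻¹' {p}) ∩ Set.Ico 0 1) = 0 := by
  have key : ∀ m : ℕ, volume ((flim M ⁻¹' {p}) ∩ Set.Ico 0 1) ≤
      2 * ENNReal.ofReal ((1/2:ℝ)^m) := by
    intro m
    obtain ⟨hL, hR⟩ := left_right_subsingleton M p m
    have hsub : (flim M ⁻¹' {p}) ∩ Set.Ico 0 1 ⊆
        (⋃ σ ∈ {σ : List ℕ | σ.length = m ∧ IsWord n σ ∧ p ∈ M.J σ ∧ aE M σ < p},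
          cylSet n m σ) ∪
        (⋃ σ ∈ {σ : List ℕ | σ.length = m ∧ IsWord n σ ∧ p ∈ M.J σ ∧ p < bE M σ},
          cylSet n m σ) := by
      rintro t ⟨hp, ht⟩
      have hw := wrd_isWord hn m ht.1 ht.2
      have hmem : p ∈ M.J (wrd n m t) := by
        have h := flim_mem_J M hn hr ht.1 ht.2 m
        rw [Set.mem_preimage, Set.mem_singleton_iff] at hp
        rwa [hp] at h

      rcases mem_split M hr hw hmem with h | h
      · exact Or.inl (Set.mem_biUnion ⟨wrd_length n m t, hw, hmem, h⟩ ⟨rfl, ht⟩)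
      · exact Or.inr (Set.mem_biUnion ⟨wrd_length n m t, hw, hmem, h⟩ ⟨rfl, ht⟩)
    calc volume ((flim M ⁻¹' {p}) ∩ Set.Ico 0 1) ≤ _ := measure_mono hsub
      _ ≤ _ + _ := measure_union_le _ _
      _ ≤ ENNReal.ofReal (1 / Nr n m) + ENNReal.ofReal (1 / Nr n m) := by
          gcongr
          · exact vol_biUnion_subsingleton hn hL fun σ hσ => ⟨hσ.1, hσ.2.1⟩
          · exact vol_biUnion_subsingleton hn hR fun σ hσ => ⟨hσ.1, hσ.2.1⟩
      _ ≤ 2 * ENNReal.ofReal ((1/2:ℝ)^m) := by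
          rw [two_mul]
          exact add_le_add (ENNReal.ofReal_le_ofReal (one_div_Nr_le hn m))
            (ENNReal.ofReal_le_ofReal (one_div_Nr_le hn m))
  have htend : Filter.Tendsto (fun m : ℕ => 2 * ENNReal.ofReal ((1/2:ℝ)^m))
      Filter.atTop (nhds 0) := by
    have h1 : ∀ m : ℕ, ENNReal.ofReal ((1/2:ℝ)^m) = (ENNReal.ofReal (1/2))^m := fun m =>
      ENNReal.ofReal_pow (by norm_num) m
    simp only [h1]
    have h2 : Filter.Tendsto (fun m : ℕ => (ENNReal.ofReal (1/2))^m) Filter.atTop (nhds 0) :=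
      ENNReal.tendsto_pow_atTop_nhds_zero_of_lt_one
        (by rw [ENNReal.ofReal_lt_one]; norm_num)
    have := ENNReal.Tendsto.const_mul h2 (Or.inr (by norm_num : (2:ℝ≥0∞) ≠ ⊤))
    simpa using this
  have := ge_of_tendsto' htend key
  simpa using this

end Meas
end MoranAux
namespace MoranAux
section Exist

variable {n : ℕ → ℕ} {r : ℕ → ℝ} (M : MoranStructure n r)

theorem exists_uniformBernoulli (hn : ∀ k ≥ 1, 2 ≤ n k)
    (hr : ∀ k ≥ 1, 0 < r k ∧ (n k : ℝ) * r k ≤ 1) :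
    ∃ μ : Measure ℝ, IsProbabilityMeasure μ ∧ μ M.moranSetᶜ = 0 ∧ (∀ x : ℝ, μ {x} = 0) ∧
      ∀ σ : List ℕ, IsWord n σ →
        μ (M.J σ ∩ M.moranSet) = 1 / ∏ j ∈ Finset.Icc 1 σ.length, (n j : ℝ≥0∞) := by
  set ν : Measure ℝ := volume.restrict (Set.Ico (0:ℝ) 1) with hν
  have haem : AEMeasurable (flim M) ν := aemeasurable_flim M hn hr
  set μ : Measure ℝ := Measure.map (flim M) ν with hμdef
  have happ : ∀ A : Set ℝ, MeasurableSet A →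
      μ A = volume ((flim M ⁻¹' A) ∩ Set.Ico 0 1) := by
    intro A hA
    rw [hμdef, Measure.map_apply_of_aemeasurable haem hA, hν,
      Measure.restrict_apply₀ (haem.nullMeasurable hA)]
  have hprob : IsProbabilityMeasure μ := by
    constructor
    rw [happ Set.univ MeasurableSet.univ]
    simp [Real.volume_Ico]
  have hsingle : ∀ x : ℝ, μ {x} = 0 := by
    intro x
    rw [happ {x} (measurableSet_singleton x)]
    exact fiber_vol_zero M hn hr x
  have hcompl : μ M.moranSetᶜ = 0 := by
    rw [happ _ (measurableSet_moranSet M).compl]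
    have : (flim M ⁻¹' M.moranSetᶜ) ∩ Set.Ico 0 1 = ∅ := by
      ext t
      simp only [Set.mem_inter_iff, Set.mem_preimage, Set.mem_compl_iff, Set.mem_empty_iff_false,
        iff_false, not_and]
      intro h ht
      exact h (flim_mem_E M hn hr ht.1 ht.2)
    rw [this, measure_empty]
  refine ⟨μ, hprob, hcompl, hsingle, ?_⟩
  intro σ hσ
  set k := σ.length with hk
  have hJσ : MeasurableSet (M.J σ ∩ M.moranSet) :=
    (measurableSet_J M hσ).inter (measurableSet_moranSet M)
  rw [happ _ hJσ]
  set X := (flim M ⁻¹' (M.J σ ∩ M.moranSet)) ∩ Set.Ico 0 1 with hX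
  have hlow : cylSet n k σ ⊆ X := by
    rintro t ⟨h1, h2⟩
    refine ⟨?_, h2⟩
    rw [Set.mem_preimage]
    constructor
    · have := flim_mem_J M hn hr h2.1 h2.2 k
      rwa [h1] at this
    · exact flim_mem_E M hn hr h2.1 h2.2
  set Bad : Set ℝ := ⋃ τ ∈ {τ : List ℕ | τ.length = k ∧ IsWord n τ ∧ τ ≠ σ},
    (M.J σ ∩ M.J τ) with hBad
  have hBadC : Bad.Countable := by
    apply Set.Countable.biUnion (Set.to_countable _)
    intro τ hτ
    exact (inter_subsingleton M hσ hτ.2.1 (by rw [← hk, hτ.1]) (Ne.symm hτ.2.2)).countable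
  have hhigh : X ⊆ cylSet n k σ ∪ ((flim M ⁻¹' Bad) ∩ Set.Ico 0 1) := by
    rintro t ⟨h1, h2⟩
    rw [Set.mem_preimage] at h1
    by_cases hcase : wrd n k t = σ
    · exact Or.inl ⟨hcase, h2⟩
    · refine Or.inr ⟨?_, h2⟩
      rw [Set.mem_preimage, hBad]
      have hmem : wrd n k t ∈ {τ : List ℕ | τ.length = k ∧ IsWord n τ ∧ τ ≠ σ} :=
        ⟨wrd_length n k t, wrd_isWord hn k h2.1 h2.2, hcase⟩
      exact Set.mem_biUnion hmem ⟨h1.1, flim_mem_J M hn hr h2.1 h2.2 k⟩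
  have hBadnull : volume ((flim M ⁻¹' Bad) ∩ Set.Ico 0 1) = 0 := by
    have hdecomp : (flim M ⁻¹' Bad) ∩ Set.Ico 0 1 =
        ⋃ p ∈ Bad, ((flim M ⁻¹' {p}) ∩ Set.Ico 0 1) := by
      ext t
      constructor
      · rintro ⟨h1, h2⟩
        exact Set.mem_biUnion h1 ⟨rfl, h2⟩
      · intro h
        obtain ⟨p, hp, hfp, ht⟩ := Set.mem_iUnion₂.1 h
        rw [Set.mem_preimage, Set.mem_singleton_iff] at hfp
        exact ⟨by rw [Set.mem_preimage, hfp]; exact hp, ht⟩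
    rw [hdecomp]
    exact (measure_biUnion_null_iff hBadC).2 fun p _ => fiber_vol_zero M hn hr p
  have hvol : volume X = ENNReal.ofReal (1 / Nr n k) := by
    apply le_antisymm
    · calc volume X ≤ volume (cylSet n k σ) + volume ((flim M ⁻¹' Bad) ∩ Set.Ico 0 1) :=
            le_trans (measure_mono hhigh) (measure_union_le _ _)
        _ = volume (cylSet n k σ) := by rw [hBadnull, add_zero]
        _ = ENNReal.ofReal (1 / Nr n k) := cyl_volume hn rfl hσ
    · rw [← cyl_volume hn (rfl : σ.length = k) hσ]
      exact measure_mono hlow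
  rw [hvol, ofReal_Nr hn k]

end Exist
end MoranAux
namespace MoranAux
section Unique

variable {n : ℕ → ℕ} {r : ℕ → ℝ} (M : MoranStructure n r)

theorem tendsto_half : Filter.Tendsto (fun m : ℕ => ENNReal.ofReal ((1/2:ℝ)^m))
    Filter.atTop (nhds 0) := by
  have h1 : ∀ m : ℕ, ENNReal.ofReal ((1/2:ℝ)^m) = (ENNReal.ofReal (1/2))^m := fun m =>
    ENNReal.ofReal_pow (by norm_num) m
  simp only [h1]
  exact ENNReal.tendsto_pow_atTop_nhds_zero_of_lt_one (by rw [ENNReal.ofReal_lt_one]; norm_num)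

variable (hn : ∀ k ≥ 1, 2 ≤ n k) (hr : ∀ k ≥ 1, 0 < r k ∧ (n k : ℝ) * r k ≤ 1)
variable (μ : Measure ℝ) (hμp : IsProbabilityMeasure μ)
variable (hμ : ∀ σ : List ℕ, IsWord n σ →
    μ (M.J σ ∩ M.moranSet) = 1 / ∏ j ∈ Finset.Icc 1 σ.length, (n j : ℝ≥0∞))

include hμp hμ in
theorem compl_null_of_cyl : μ M.moranSetᶜ = 0 := by
  have h0 := hμ [] isWord_nil
  simp only [List.length_nil] at h0
  rw [show Finset.Icc 1 0 = (∅ : Finset ℕ) by rfl] at h0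
  simp only [Finset.prod_empty] at h0
  norm_num at h0
  have hE : μ M.moranSet = 1 := by
    apply le_antisymm prob_le_one
    rw [← h0]
    exact measure_mono Set.inter_subset_right
  rw [measure_compl (measurableSet_moranSet M) (measure_ne_top μ _), hE, measure_univ,
    tsub_self]

include hn hμp hμ in
theorem singleton_null_of_cyl : ∀ x : ℝ, μ {x} = 0 := by
  intro x
  by_cases hx : x ∈ M.moranSet
  · have key : ∀ m : ℕ, μ {x} ≤ ENNReal.ofReal ((1/2:ℝ)^m) := by
      intro m
      have hxm : x ∈ M.approx m := by
        rw [MoranStructure.moranSet, Set.mem_iInter] at hx; exact hx m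
      rw [MoranStructure.approx] at hxm
      obtain ⟨τ, ⟨hlen, hw⟩, hmem⟩ := Set.mem_iUnion₂.1 hxm
      calc μ {x} ≤ μ (M.J τ ∩ M.moranSet) :=
            measure_mono (Set.singleton_subset_iff.2 ⟨hmem, hx⟩)
        _ = 1 / ∏ j ∈ Finset.Icc 1 τ.length, (n j : ℝ≥0∞) := hμ τ hw
        _ = ENNReal.ofReal (1 / Nr n m) := by rw [hlen, ofReal_Nr hn m]
        _ ≤ ENNReal.ofReal ((1/2:ℝ)^m) := ENNReal.ofReal_le_ofReal (one_div_Nr_le hn m)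
    have := ge_of_tendsto' tendsto_half key
    simpa using this
  · have h := compl_null_of_cyl M μ hμp hμ
    exact measure_mono_null (Set.singleton_subset_iff.2 hx) h

noncomputable def goodWords (U : Set ℝ) (m : ℕ) : Finset (List ℕ) :=
  Set.Finite.toFinset (Set.Finite.subset (words_finite n m)
    (fun σ hσ => ⟨hσ.1, hσ.2.1⟩) :
      {σ : List ℕ | σ.length = m ∧ IsWord n σ ∧ M.J σ ⊆ U}.Finite)

theorem mem_goodWords {U : Set ℝ} {m : ℕ} {σ : List ℕ} :
    σ ∈ goodWords M U m ↔ σ.length = m ∧ IsWord n σ ∧ M.J σ ⊆ U :=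
  Set.Finite.mem_toFinset _

include hn hr hμp hμ in
theorem measure_open_aux {U : Set ℝ} (hU : IsOpen U) :
    μ U = ⨆ m : ℕ, ((goodWords M U m).card : ℝ≥0∞) *
      (1 / ∏ j ∈ Finset.Icc 1 m, (n j : ℝ≥0∞)) := by
  have hEc := compl_null_of_cyl M μ hμp hμ
  have hsing := singleton_null_of_cyl M hn μ hμp hμ
  set B : ℕ → Set ℝ := fun m => ⋃ σ ∈ goodWords M U m, (M.J σ ∩ M.moranSet) with hB
  have hBval : ∀ m, μ (B m) = ((goodWords M U m).card : ℝ≥0∞) *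
      (1 / ∏ j ∈ Finset.Icc 1 m, (n j : ℝ≥0∞)) := by
    intro m
    have hd : Set.Pairwise ↑(goodWords M U m)
        (Function.onFun (MeasureTheory.AEDisjoint μ) fun σ => M.J σ ∩ M.moranSet) := by
      intro σ hσ τ hτ hne
      have hσ' := (mem_goodWords M).1 hσ
      have hτ' := (mem_goodWords M).1 hτ
      apply measure_mono_null
        (Set.inter_subset_inter Set.inter_subset_left Set.inter_subset_left)
      exact null_of_subsingleton hsing
        (inter_subsingleton M hσ'.2.1 hτ'.2.1 (by rw [hσ'.1, hτ'.1]) hne)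
    have hm : ∀ σ ∈ goodWords M U m, NullMeasurableSet (M.J σ ∩ M.moranSet) μ :=
      fun σ hσ => ((measurableSet_J M ((mem_goodWords M).1 hσ).2.1).inter
        (measurableSet_moranSet M)).nullMeasurableSet
    rw [hB, measure_biUnion_finset₀ hd hm]
    rw [Finset.sum_congr rfl (fun σ hσ => ?_), Finset.sum_const, nsmul_eq_mul]
    obtain ⟨hlen, hw, -⟩ := (mem_goodWords M).1 hσ
    rw [hμ σ hw, hlen]
  have hBsub : ∀ m, B m ⊆ U ∩ M.moranSet := by
    intro m x hx
    obtain ⟨σ, hσ, hmem⟩ := Set.mem_iUnion₂.1 hx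
    exact ⟨((mem_goodWords M).1 hσ).2.2 hmem.1, hmem.2⟩
  have hcover : U ∩ M.moranSet ⊆ ⋃ m, B m := by
    rintro x ⟨hxU, hxE⟩
    obtain ⟨ε, hε, hball⟩ := Metric.isOpen_iff.1 hU x hxU
    obtain ⟨m, hm⟩ := exists_pow_lt_of_lt_one hε (by norm_num : (1/2:ℝ) < 1)
    have hxm : x ∈ M.approx m := by
      have h := hxE
      rw [MoranStructure.moranSet, Set.mem_iInter] at h
      exact h m
    rw [MoranStructure.approx] at hxm
    obtain ⟨τ, ⟨hlen, hw⟩, hmem⟩ := Set.mem_iUnion₂.1 hxm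
    have hJU : M.J τ ⊆ U := by
      intro y hy
      apply hball
      rw [Metric.mem_ball]
      calc dist y x ≤ Metric.diam (M.J τ) :=
            Metric.dist_le_diam_of_mem (isBounded_J M hw) hy hmem
        _ ≤ (1/2:ℝ)^τ.length := diam_le M hn hr hw
        _ < ε := by rw [hlen]; exact hm
    exact Set.mem_iUnion.2 ⟨m, Set.mem_biUnion ((mem_goodWords M).2 ⟨hlen, hw, hJU⟩)
      ⟨hmem, hxE⟩⟩
  set Bad : Set ℝ := ⋃ m : ℕ, ⋃ σ ∈ {σ : List ℕ | σ.length = m ∧ IsWord n σ},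
      ⋃ τ ∈ {τ : List ℕ | τ.length = m ∧ IsWord n τ ∧ τ ≠ σ}, (M.J σ ∩ M.J τ) with hBadDef
  have hBadnull : μ Bad = 0 := by
    apply null_of_countable hsing
    apply Set.countable_iUnion; intro m
    apply Set.Countable.biUnion (Set.to_countable _); intro σ hσ
    apply Set.Countable.biUnion (Set.to_countable _); intro τ hτ
    exact (inter_subsingleton M hσ.2 hτ.2.1 (by rw [hσ.1, hτ.1]) (Ne.symm hτ.2.2)).countable
  have hstep : ∀ m, B m ⊆ B (m+1) ∪ Bad := by
    intro m x hx
    obtain ⟨σ, hσ, hmem⟩ := Set.mem_iUnion₂.1 hx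
    obtain ⟨hlen, hw, hJU⟩ := (mem_goodWords M).1 hσ
    have hxE := hmem.2
    have hxm : x ∈ M.approx (m+1) := by
      have h := hxE
      rw [MoranStructure.moranSet, Set.mem_iInter] at h
      exact h (m+1)
    rw [MoranStructure.approx] at hxm
    obtain ⟨τ, ⟨hlen', hw'⟩, hmem'⟩ := Set.mem_iUnion₂.1 hxm
    have hτne : τ ≠ [] := fun h => by simp [h] at hlen'
    obtain ⟨π, c, rfl⟩ : ∃ π c, τ = π ++ [c] :=
      ⟨τ.dropLast, τ.getLast hτne, (List.dropLast_append_getLast hτne).symm⟩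
    obtain ⟨hπw, hcw⟩ := isWord_concat.1 hw'
    have hπlen : π.length = m := by simp at hlen'; omega
    have hsubJ : M.J (π ++ [c]) ⊆ M.J π := M.J_subset π hπw c hcw
    by_cases hcase : π = σ
    · left
      have hJτU : M.J (π ++ [c]) ⊆ U := fun y hy => hJU (by rw [← hcase]; exact hsubJ hy)
      exact Set.mem_biUnion ((mem_goodWords M).2 ⟨by simp [hπlen], hw', hJτU⟩) ⟨hmem', hxE⟩
    · right
      rw [hBadDef]
      refine Set.mem_iUnion.2 ⟨m, ?_⟩
      refine Set.mem_biUnion (show σ ∈ {σ' : List ℕ | σ'.length = m ∧ IsWord n σ'} from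
        ⟨hlen, hw⟩) ?_
      refine Set.mem_biUnion (show π ∈ {τ' : List ℕ | τ'.length = m ∧ IsWord n τ' ∧ τ' ≠ σ} from
        ⟨hπlen, hπw, hcase⟩) ?_
      exact ⟨hmem.1, hsubJ hmem'⟩
  have hchain : ∀ j m, j ≤ m → B j ⊆ B m ∪ Bad := by
    intro j m
    induction m with
    | zero => intro hjm; rw [Nat.le_zero.1 hjm]; exact Set.subset_union_left
    | succ m ih =>
      intro hjm
      rcases Nat.lt_or_ge j (m+1) with h | h
      · intro x hx
        rcases ih (Nat.lt_succ_iff.1 h) hx with h1 | h1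
        · rcases hstep m h1 with h2 | h2
          · exact Or.inl h2
          · exact Or.inr h2
        · exact Or.inr h1
      · have : j = m+1 := le_antisymm hjm h
        rw [this]; exact Set.subset_union_left
  set C : ℕ → Set ℝ := fun m => ⋃ j : ℕ, ⋃ (_ : j ≤ m), B j with hC
  have hCmono : Monotone C := by
    intro a b hab x hx
    obtain ⟨j, hj, hx⟩ := Set.mem_iUnion₂.1 hx
    exact Set.mem_iUnion₂.2 ⟨j, le_trans hj hab, hx⟩
  have hCBm : ∀ m, μ (C m) = μ (B m) := by
    intro m
    apply le_antisymm
    · have hsub : C m ⊆ B m ∪ Bad := by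
        intro x hx
        obtain ⟨j, hj, hx⟩ := Set.mem_iUnion₂.1 hx
        exact hchain j m hj hx
      calc μ (C m) ≤ μ (B m) + μ Bad := le_trans (measure_mono hsub) (measure_union_le _ _)
        _ = μ (B m) := by rw [hBadnull, add_zero]
    · exact measure_mono (fun x hx => Set.mem_iUnion₂.2 ⟨m, le_rfl, hx⟩)
  have hUE : μ U = μ (U ∩ M.moranSet) := by
    apply le_antisymm
    · calc μ U ≤ μ (U ∩ M.moranSet) + μ M.moranSetᶜ := by
            refine le_trans (measure_mono (fun x hx => ?_)) (measure_union_le _ _)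
            by_cases h : x ∈ M.moranSet
            · exact Or.inl ⟨hx, h⟩
            · exact Or.inr h
        _ = μ (U ∩ M.moranSet) := by rw [hEc, add_zero]
    · exact measure_mono Set.inter_subset_left
  have hUC : μ (U ∩ M.moranSet) = μ (⋃ m, C m) := by
    apply le_antisymm
    · apply measure_mono
      intro x hx
      obtain ⟨m, hm⟩ := Set.mem_iUnion.1 (hcover hx)
      exact Set.mem_iUnion.2 ⟨m, Set.mem_iUnion₂.2 ⟨m, le_rfl, hm⟩⟩
    · apply measure_mono
      intro x hx
      obtain ⟨m, hm⟩ := Set.mem_iUnion.1 hx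
      obtain ⟨j, hj, hx'⟩ := Set.mem_iUnion₂.1 hm
      exact hBsub j hx'
  rw [hUE, hUC, hCmono.directed_le.measure_iUnion]
  exact iSup_congr fun m => by rw [hCBm m, hBval m]

include hn hr in
theorem measure_eq_of_cyl (μ₁ μ₂ : Measure ℝ) (h₁p : IsProbabilityMeasure μ₁)
    (h₂p : IsProbabilityMeasure μ₂)
    (h₁ : ∀ σ : List ℕ, IsWord n σ →
      μ₁ (M.J σ ∩ M.moranSet) = 1 / ∏ j ∈ Finset.Icc 1 σ.length, (n j : ℝ≥0∞))
    (h₂ : ∀ σ : List ℕ, IsWord n σ →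
      μ₂ (M.J σ ∩ M.moranSet) = 1 / ∏ j ∈ Finset.Icc 1 σ.length, (n j : ℝ≥0∞)) :
    μ₁ = μ₂ := by
  haveI := h₁p; haveI := h₂p
  apply MeasureTheory.ext_of_generate_finite {s : Set ℝ | IsOpen s} ?_ ?_ ?_ ?_
  · exact BorelSpace.measurable_eq
  · exact fun s (hs : IsOpen s) t (ht : IsOpen t) _ => hs.inter ht
  · intro s hs
    rw [measure_open_aux M hn hr μ₁ h₁p h₁ hs, measure_open_aux M hn hr μ₂ h₂p h₂ hs]
  · rw [h₁p.measure_univ, h₂p.measure_univ]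

end Unique
end MoranAux
/-- **Existence and uniqueness of the uniform Bernoulli measure.**
For a homogeneous Moran structure with `n_k ≥ 2`, there is a unique Borel
probability measure `μ` on `ℝ` with `μ(J_σ ∩ E) = 1/(n_1 ⋯ n_k)` for every word
`σ` of length `k`; moreover `μ` is concentrated on `E` and vanishes on singletons. -/
theorem moran_uniformBernoulli_existsUnique
    (n : ℕ → ℕ) (r : ℕ → ℝ)
    (hn : ∀ k ≥ 1, 2 ≤ n k)
    (hr : ∀ k ≥ 1, 0 < r k ∧ (n k : ℝ) * r k ≤ 1)
    (M : MoranStructure n r) :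
    ∃ μ : Measure ℝ,
      (IsProbabilityMeasure μ ∧
        ∀ σ : List ℕ, IsWord n σ →
          μ (M.J σ ∩ M.moranSet) = 1 / ∏ j ∈ Finset.Icc 1 σ.length, (n j : ℝ≥0∞)) ∧
      (∀ μ' : Measure ℝ, IsProbabilityMeasure μ' →
        (∀ σ : List ℕ, IsWord n σ →
          μ' (M.J σ ∩ M.moranSet) = 1 / ∏ j ∈ Finset.Icc 1 σ.length, (n j : ℝ≥0∞)) →
        μ' = μ) ∧
      μ M.moranSetᶜ = 0 ∧ (∀ x : ℝ, μ {x} = 0) := by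
  obtain ⟨μ, hprob, hcompl, hsing, hcyl⟩ := MoranAux.exists_uniformBernoulli M hn hr
  refine ⟨μ, ⟨hprob, hcyl⟩, ?_, hcompl, hsing⟩
  intro μ' hμ'p hμ'cyl
  exact MoranAux.measure_eq_of_cyl M hn hr μ' μ hμ'p hprob hμ'cyl hcyl
end
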